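/- arXiv:math/0404551 — 7 statements merged into one kernel-verified Lean document; each statement's English description precedes it below -/
import Mathlib

section
/- Let u : 𝔻 → [0,∞) be continuous and integrable, and let R ∈ (0,1). Then ∫_𝔻 u(z)·ln(1/|z|) dA(z) ≤ (2π/e)·R·sup_{|z| ≤ R} u(z) + ln(1/R)·∫_𝔻 u dA. (This is the key splitting inequality in the proof of the paper's Proposition on τ, using max_{r ∈ [0,1]} r·ln(1/r) = 1/e.) -/
open MeasureTheory

open Real in
/-- Integrability transfer through polar coordinates on `ℝ × ℝ`. -/
lemma integrable_of_polar_aux (f : ℝ × ℝ → ℝ)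
    (hf : IntegrableOn (fun p => p.1 • f (polarCoord.symm p)) polarCoord.target) :
    Integrable f := by
  set B : ℝ × ℝ → ℝ × ℝ →L[ℝ] ℝ × ℝ := fun p =>
    LinearMap.toContinuousLinearMap (Matrix.toLin (Module.Basis.finTwoProd ℝ) (Module.Basis.finTwoProd ℝ)
      !![cos p.2, -p.1 * sin p.2; sin p.2, p.1 * cos p.2]) with hB
  have A : ∀ p ∈ polarCoord.target, HasFDerivWithinAt polarCoord.symm (B p) polarCoord.target p :=
    fun p _ => (hasFDerivAt_polarCoord_symm p).hasFDerivWithinAt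
  have B_det : ∀ p, (B p).det = p.1 := by
    intro p
    conv_rhs => rw [← one_mul p.1, ← cos_sq_add_sin_sq p.2]
    simp only [hB, neg_mul, LinearMap.det_toContinuousLinearMap, LinearMap.det_toLin,
      Matrix.det_fin_two_of, sub_neg_eq_add]
    ring
  have hinj : Set.InjOn polarCoord.symm polarCoord.target := polarCoord.symm.injOn
  have h1 : IntegrableOn f (polarCoord.symm '' polarCoord.target) := by
    rw [integrableOn_image_iff_integrableOn_abs_det_fderiv_smul volume
      polarCoord.open_target.measurableSet A hinj f]
    refine hf.congr_fun (fun p hp => ?_) polarCoord.open_target.measurableSet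
    rw [B_det, abs_of_pos hp.1]
  rw [polarCoord.symm_image_target_eq_source] at h1
  have h2 : volume.restrict polarCoord.source = volume := by
    rw [Measure.restrict_congr_set polarCoord_source_ae_eq_univ, Measure.restrict_univ]
  rwa [IntegrableOn, h2] at h1

/-- Integrability transfer through polar coordinates on `ℂ`. -/
lemma integrable_of_polar_complex (f : ℂ → ℝ)
    (hf : IntegrableOn (fun p => p.1 • f (Complex.polarCoord.symm p)) polarCoord.target) :
    Integrable f := by
  rw [← (Complex.volume_preserving_equiv_real_prod.symm).integrable_comp_emb
    Complex.measurableEquivRealProd.symm.measurableEmbedding]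
  exact integrable_of_polar_aux _ hf

open Real in
/-- The indicator integrand in polar coordinates. -/
lemma polar_indicator_eq (R : ℝ) (hR : 0 < R) :
    ∀ p ∈ polarCoord.target,
      p.1 • (Metric.ball (0:ℂ) R).indicator (fun z => ‖z‖⁻¹) (Complex.polarCoord.symm p)
        = (Set.Ioo (0:ℝ) R ×ˢ Set.Ioo (-π) π).indicator (fun _ => (1:ℝ)) p := by
  intro p hp
  have hp1 : 0 < p.1 := hp.1
  have habs : ‖Complex.polarCoord.symm p‖ = p.1 := by
    rw [Complex.norm_polarCoord_symm, abs_of_pos hp1]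
  have hmem : Complex.polarCoord.symm p ∈ Metric.ball (0:ℂ) R ↔ p.1 < R := by
    rw [Metric.mem_ball, Complex.dist_eq, sub_zero, habs]
  by_cases h : p.1 < R
  · rw [Set.indicator_of_mem (hmem.2 h), Set.indicator_of_mem (by exact ⟨⟨hp1, h⟩, hp.2⟩)]
    rw [habs, smul_eq_mul, mul_inv_cancel₀ hp1.ne']
  · rw [Set.indicator_of_notMem (fun hm => h (hmem.1 hm)),
      Set.indicator_of_notMem (fun hm => h hm.1.2), smul_zero]

open Real in
lemma integrable_indicator_inv_norm (R : ℝ) (hR : 0 < R) :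
    Integrable ((Metric.ball (0:ℂ) R).indicator (fun z => ‖z‖⁻¹)) := by
  apply integrable_of_polar_complex
  have hs : MeasurableSet (Set.Ioo (0:ℝ) R ×ˢ Set.Ioo (-π) π) :=
    measurableSet_Ioo.prod measurableSet_Ioo
  have hvol : volume (Set.Ioo (0:ℝ) R ×ˢ Set.Ioo (-π) π) < ⊤ := by
    rw [Measure.volume_eq_prod, Measure.prod_prod, Real.volume_Ioo, Real.volume_Ioo]
    exact ENNReal.mul_lt_top ENNReal.ofReal_lt_top ENNReal.ofReal_lt_top
  have hind : Integrable ((Set.Ioo (0:ℝ) R ×ˢ Set.Ioo (-π) π).indicator (fun _ => (1:ℝ))) := by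
    rw [integrable_indicator_iff hs]
    exact integrableOn_const hvol.ne
  exact hind.integrableOn.congr_fun (fun p hp => (polar_indicator_eq R hR p hp).symm)
    polarCoord.open_target.measurableSet

open Real in
lemma integral_inv_norm_ball (R : ℝ) (hR : 0 < R) :
    ∫ z in Metric.ball (0:ℂ) R, ‖z‖⁻¹ = R * (2 * π) := by
  have hs : MeasurableSet (Set.Ioo (0:ℝ) R ×ˢ Set.Ioo (-π) π) :=
    measurableSet_Ioo.prod measurableSet_Ioo
  have hsub : Set.Ioo (0:ℝ) R ×ˢ Set.Ioo (-π) π ⊆ polarCoord.target := by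
    intro p hp
    exact ⟨hp.1.1, hp.2⟩
  have key := Complex.integral_comp_polarCoord_symm
    ((Metric.ball (0:ℂ) R).indicator (fun z => ‖z‖⁻¹))
  rw [setIntegral_congr_fun polarCoord.open_target.measurableSet (polar_indicator_eq R hR)] at key
  rw [integral_indicator hs] at key
  rw [integral_indicator measurableSet_ball] at key
  rw [Measure.restrict_restrict hs, Set.inter_eq_self_of_subset_left hsub, setIntegral_const,
    smul_eq_mul, mul_one] at key
  rw [← key, Measure.volume_eq_prod, measureReal_def, Measure.prod_prod, Real.volume_Ioo, Real.volume_Ioo,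
    ENNReal.toReal_mul, ENNReal.toReal_ofReal (by linarith),
    ENNReal.toReal_ofReal (by nlinarith [Real.pi_pos])]
  ring

/-- For `u : 𝔻 → [0,∞)` continuous and integrable and `R ∈ (0,1)`,
`∫_𝔻 u(z)·ln(1/|z|) dA(z) ≤ (2π/e)·R·sup_{|z| ≤ R} u(z) + ln(1/R)·∫_𝔻 u dA`. -/
theorem tau_le_sup_add_log_mul_area
    (u : ℂ → ℝ) (hc : ContinuousOn u (Metric.ball (0 : ℂ) 1))
    (hpos : ∀ z ∈ Metric.ball (0 : ℂ) 1, 0 ≤ u z)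
    (hint : IntegrableOn u (Metric.ball (0 : ℂ) 1))
    (R : ℝ) (hR : R ∈ Set.Ioo (0 : ℝ) 1) :
    ∫ z in Metric.ball (0 : ℂ) 1, u z * Real.log (1 / ‖z‖)
      ≤ (2 * Real.pi / Real.exp 1) * R * (⨆ z : Metric.closedBall (0 : ℂ) R, u (z : ℂ))
        + Real.log (1 / R) * ∫ z in Metric.ball (0 : ℂ) 1, u z := by
  obtain ⟨hR0, hR1⟩ := hR
  set D := Metric.ball (0 : ℂ) 1 with hD
  set M := ⨆ z : Metric.closedBall (0 : ℂ) R, u (z : ℂ) with hMdef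
  have hsub : Metric.closedBall (0 : ℂ) R ⊆ D := Metric.closedBall_subset_ball hR1
  have hbdd : BddAbove (Set.range fun z : Metric.closedBall (0 : ℂ) R => u (z : ℂ)) := by
    rw [← Set.image_eq_range]
    exact ((isCompact_closedBall (0:ℂ) R).image_of_continuousOn (hc.mono hsub)).bddAbove
  have hM : ∀ z ∈ Metric.closedBall (0 : ℂ) R, u z ≤ M :=
    fun z hz => le_ciSup hbdd ⟨z, hz⟩
  have hM0 : 0 ≤ M :=
    le_trans (hpos 0 (by simp [hD])) (hM 0 (Metric.mem_closedBall_self hR0.le))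
  have hlogR : 0 ≤ Real.log (1 / R) :=
    Real.log_nonneg (one_le_one_div hR0 hR1.le)
  set h := (Metric.ball (0:ℂ) R).indicator (fun z => ‖z‖⁻¹) with hh
  have hInd : Integrable h := integrable_indicator_inv_norm R hR0
  set g := fun z => (M / Real.exp 1) * h z + Real.log (1 / R) * u z with hg
  have hgint : Integrable g (volume.restrict D) := by
    exact ((hInd.const_mul _).restrict).add (hint.const_mul _)
  have hmono : (∫ z in D, u z * Real.log (1 / ‖z‖)) ≤ ∫ z in D, g z := by
    refine integral_mono_of_nonneg ?_ hgint ?_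
    · refine (ae_restrict_iff' measurableSet_ball).2 (Filter.Eventually.of_forall ?_)
      intro z hz
      rcases eq_or_ne z 0 with rfl | hz0
      · simp
      · have habs : 0 < ‖z‖ := norm_pos_iff.mpr hz0
        have hlt : ‖z‖ < 1 := by
          simpa [hD, Metric.mem_ball, Complex.dist_eq] using hz
        exact mul_nonneg (hpos z hz)
          (Real.log_nonneg (one_le_one_div habs hlt.le))
    · refine (ae_restrict_iff' measurableSet_ball).2 (Filter.Eventually.of_forall ?_)
      intro z hz
      by_cases hzR : z ∈ Metric.ball (0:ℂ) R
      · rcases eq_or_ne z 0 with rfl | hz0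
        · have : h (0:ℂ) = 0 := by
            rw [hh, Set.indicator_of_mem (Metric.mem_ball_self hR0)]
            simp
          simp only [hg, this, mul_zero, zero_add, norm_zero, div_zero, Real.log_zero, mul_zero]
          exact mul_nonneg hlogR (hpos 0 (by simp [hD]))
        · have habs : 0 < ‖z‖ := norm_pos_iff.mpr hz0
          have hltR : ‖z‖ < R := by simpa [Complex.dist_eq] using hzR
          have hlog : Real.log (1 / ‖z‖) ≤ (Real.exp 1 * ‖z‖)⁻¹ := by
            have hpos' : (0:ℝ) < (Real.exp 1 * ‖z‖)⁻¹ := by positivity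
            have hle := Real.log_le_sub_one_of_pos hpos'
            rw [Real.log_inv, Real.log_mul (Real.exp_ne_zero 1) habs.ne', Real.log_exp] at hle
            rw [one_div, Real.log_inv]
            linarith
          have huz : u z ≤ M := hM z (Metric.ball_subset_closedBall hzR)
          have hlognn : 0 ≤ Real.log (1 / ‖z‖) := by
            have : ‖z‖ < 1 := lt_trans hltR hR1
            exact Real.log_nonneg (one_le_one_div habs this.le)
          have key : u z * Real.log (1 / ‖z‖)
              ≤ M * (Real.exp 1 * ‖z‖)⁻¹ :=
            mul_le_mul huz hlog hlognn hM0
          have hhz : h z = (‖z‖)⁻¹ := by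
            rw [hh, Set.indicator_of_mem hzR]
          have : M * (Real.exp 1 * ‖z‖)⁻¹ = (M / Real.exp 1) * h z := by
            rw [hhz, mul_inv]
            ring
          rw [this] at key
          refine le_trans key ?_
          simp only [hg]
          nlinarith [mul_nonneg hlogR (hpos z hz)]
      · have hge : R ≤ ‖z‖ := by
          by_contra hcon
          exact hzR (by simpa [Complex.dist_eq] using lt_of_not_ge hcon)
        have habs : 0 < ‖z‖ := lt_of_lt_of_le hR0 hge
        have hlog : Real.log (1 / ‖z‖) ≤ Real.log (1 / R) := by
          apply Real.log_le_log (by positivity)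
          exact one_div_le_one_div_of_le hR0 hge
        have hhz : h z = 0 := by rw [hh, Set.indicator_of_notMem hzR]
        have : u z * Real.log (1 / ‖z‖) ≤ u z * Real.log (1 / R) :=
          mul_le_mul_of_nonneg_left hlog (hpos z hz)
        simp only [hg, hhz, mul_zero, zero_add]
        linarith
  have hsplit : (∫ z in D, g z)
      = (M / Real.exp 1) * (∫ z in D, h z) + Real.log (1 / R) * ∫ z in D, u z := by
    rw [hg, integral_add ((hInd.const_mul _).restrict) (hint.const_mul _),
      integral_const_mul, integral_const_mul]
  have hDh : (∫ z in D, h z) = R * (2 * Real.pi) := by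
    rw [hh, setIntegral_indicator measurableSet_ball,
      Set.inter_eq_self_of_subset_right (Metric.ball_subset_ball hR1.le)]
    exact integral_inv_norm_ball R hR0
  rw [hsplit] at hmono
  refine le_trans hmono (le_of_eq ?_)
  rw [hDh]
  ring
end

section
/- Let (u_n) be a sequence of continuous integrable functions u_n : 𝔻 → [0,∞). Set τ_n = ∫_𝔻 u_n(z)·ln(1/|z|) dA(z) and a_n = ∫_𝔻 u_n dA. If τ_n → ∞ and there is a constant B > 0 with a_n ≤ B·τ_n for all n, then sup_{z ∈ 𝔻} (1−|z|²)²·u_n(z) → ∞ as n → ∞. (This is the paper's Proposition 'area(f_n) = O(τ(f_n)) implies the hyperbolic derivatives blow up', stated for the functions u_n = |f_n'|².) -/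
open MeasureTheory Filter

open Set

lemma rlog_le_one {x : ℝ} (hx : 0 < x) : x * Real.log (1 / x) ≤ 1 := by
  rcases le_or_gt 1 x with h | h
  · have h0 : Real.log (1 / x) ≤ 0 :=
      Real.log_nonpos (by positivity) (by rw [div_le_one hx]; linarith)
    nlinarith
  · have h1 : Real.log (1 / x) ≤ 1 / x - 1 := Real.log_le_sub_one_of_pos (by positivity)
    have h2 : x * Real.log (1 / x) ≤ x * (1 / x - 1) := by nlinarith
    have h3 : x * (1 / x - 1) = 1 - x := by field_simp
    linarith

lemma integrableOn_log_inv_abs :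
    IntegrableOn (fun z : ℂ => Real.log (1 / ‖z‖)) (Metric.ball 0 1) := by
  set F : ℝ × ℝ → ℝ := fun p => Real.log (1 / Real.sqrt (p.1 ^ 2 + p.2 ^ 2)) with hF
  set s : Set (ℝ × ℝ) := Ioo (0:ℝ) 1 ×ˢ Ioo (-Real.pi) Real.pi with hs
  have hs_meas : MeasurableSet s := measurableSet_Ioo.prod measurableSet_Ioo
  have hs_sub : s ⊆ polarCoord.target := by
    rintro ⟨a, b⟩ ⟨ha, hb⟩
    exact ⟨ha.1, hb⟩
  set B : ℝ × ℝ → ℝ × ℝ →L[ℝ] ℝ × ℝ := fun p =>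
    LinearMap.toContinuousLinearMap (Matrix.toLin (Module.Basis.finTwoProd ℝ) (Module.Basis.finTwoProd ℝ)
      !![Real.cos p.2, -p.1 * Real.sin p.2; Real.sin p.2, p.1 * Real.cos p.2]) with hB
  have B_det : ∀ p, (B p).det = p.1 := by
    intro p
    conv_rhs => rw [← one_mul p.1, ← Real.cos_sq_add_sin_sq p.2]
    simp only [hB, neg_mul, LinearMap.det_toContinuousLinearMap, LinearMap.det_toLin,
      Matrix.det_fin_two_of, sub_neg_eq_add]
    ring
  have hf' : ∀ p ∈ s, HasFDerivWithinAt polarCoord.symm (B p) s p := fun p _ =>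
    (hasFDerivAt_polarCoord_symm p).hasFDerivWithinAt
  have hinj : InjOn polarCoord.symm s := polarCoord.symm.injOn.mono hs_sub
  -- key computation: F ∘ polarCoord.symm
  have hcomp : ∀ p : ℝ × ℝ, 0 < p.1 → F (polarCoord.symm p) = Real.log (1 / p.1) := by
    intro p hp
    have h1 : (p.1 * Real.cos p.2) ^ 2 + (p.1 * Real.sin p.2) ^ 2 = p.1 ^ 2 := by
      have := Real.sin_sq_add_cos_sq p.2; nlinarith
    simp only [hF, polarCoord_symm_apply, h1, Real.sqrt_sq hp.le]
  have hFint : IntegrableOn (fun p : ℝ × ℝ => |(B p).det| • F (polarCoord.symm p)) s := by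
    have hvol : volume s ≠ ⊤ :=
      (((Metric.isBounded_Ioo (0:ℝ) 1).prod
        (Metric.isBounded_Ioo (-Real.pi) Real.pi)).measure_lt_top).ne
    apply Measure.integrableOn_of_bounded (M := 1) hvol
    · have : Measurable fun p : ℝ × ℝ => |(B p).det| • F (polarCoord.symm p) := by
        simp only [B_det, hF, polarCoord_symm_apply, smul_eq_mul]
        apply (measurable_fst.abs).mul
        apply Real.measurable_log.comp
        apply Measurable.div measurable_const
        apply Measurable.sqrt
        fun_prop
      exact this.aestronglyMeasurable
    · filter_upwards [ae_restrict_mem hs_meas] with p hp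
      have hp1 : 0 < p.1 := hp.1.1
      have hp2 : p.1 < 1 := hp.1.2
      rw [hcomp p hp1, B_det, smul_eq_mul, abs_of_pos hp1, Real.norm_eq_abs, abs_of_nonneg]
      · exact rlog_le_one hp1
      · have : (0:ℝ) ≤ Real.log (1 / p.1) :=
          Real.log_nonneg (by rw [le_div_iff₀ hp1]; linarith)
        positivity
  have himage : IntegrableOn F (polarCoord.symm '' s) :=
    (integrableOn_image_iff_integrableOn_abs_det_fderiv_smul volume hs_meas hf' hinj F).2 hFint
  -- null set of the slit
  have hnull : volume {p : ℝ × ℝ | p.2 = 0} = 0 := by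
    have B0 : volume (LinearMap.ker (LinearMap.snd ℝ ℝ ℝ) : Set (ℝ × ℝ)) = 0 := by
      apply Measure.addHaar_submodule
      rw [Ne, LinearMap.ker_eq_top]
      intro h
      have : (LinearMap.snd ℝ ℝ ℝ) (0, 1) = (0 : ℝ × ℝ →ₗ[ℝ] ℝ) (0, 1) := by rw [h]
      simp at this
    have hker : {p : ℝ × ℝ | p.2 = 0} = (LinearMap.ker (LinearMap.snd ℝ ℝ ℝ) : Set (ℝ × ℝ)) := by
      ext p; simp [LinearMap.mem_ker]
    rw [hker]; exact B0
  have hnullint : IntegrableOn F {p : ℝ × ℝ | p.2 = 0} := by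
    unfold IntegrableOn
    rw [Measure.restrict_eq_zero.mpr hnull]
    exact integrable_zero_measure
  set T : Set (ℝ × ℝ) := {p | Real.sqrt (p.1 ^ 2 + p.2 ^ 2) < 1} with hT
  have hsub : T ⊆ (polarCoord.symm '' s) ∪ {p : ℝ × ℝ | p.2 = 0} := by
    intro p hpT
    rcases eq_or_ne p.2 0 with h2 | h2
    · exact Or.inr h2
    · left
      have hsrc : p ∈ polarCoord.source := Or.inr h2
      refine ⟨polarCoord p, ?_, polarCoord.left_inv hsrc⟩
      have htgt := polarCoord.map_source hsrc
      rw [polarCoord_target] at htgt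
      constructor
      · constructor
        · exact htgt.1
        · exact hpT
      · exact htgt.2
  have hTint : IntegrableOn F T := (himage.union hnullint).mono_set hsub
  have hpre : Metric.ball (0:ℂ) 1 = Complex.measurableEquivRealProd ⁻¹' T := by
    ext z
    simp only [Metric.mem_ball, dist_zero_right, mem_preimage,
      Complex.measurableEquivRealProd_apply, hT, mem_setOf_eq]
    rw [Complex.norm_def, Complex.normSq_apply]
    ring_nf
  have := (Complex.volume_preserving_equiv_real_prod.integrableOn_comp_preimage
    Complex.measurableEquivRealProd.measurableEmbedding (f := F) (s := T)).2 hTint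
  rw [hpre]
  convert this using 1
  case e'_3 => rfl
  funext z
  simp only [Function.comp_apply, Complex.measurableEquivRealProd_apply, hF]
  rw [Complex.norm_def, Complex.normSq_apply]
  norm_num [pow_two]

/-- If `u_n : 𝔻 → [0,∞)` are continuous and integrable,
`τ_n = ∫_𝔻 u_n(z)·ln(1/|z|) dA → ∞` and `a_n = ∫_𝔻 u_n dA ≤ B·τ_n`, then
`sup_{z ∈ 𝔻} (1−|z|²)²·u_n(z) → ∞`, i.e. for every `M` there is `N` such that the
supremum exceeds `M` for all `n ≥ N`. -/
theorem hyperbolic_sup_tendsto_atTop_of_area_bigO_tau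
    (u : ℕ → ℂ → ℝ)
    (hc : ∀ n, ContinuousOn (u n) (Metric.ball (0 : ℂ) 1))
    (hpos : ∀ n, ∀ z ∈ Metric.ball (0 : ℂ) 1, 0 ≤ u n z)
    (hint : ∀ n, IntegrableOn (u n) (Metric.ball (0 : ℂ) 1))
    (htau : Tendsto
      (fun n => ∫ z in Metric.ball (0 : ℂ) 1, u n z * Real.log (1 / ‖z‖))
      atTop atTop)
    (B : ℝ) (hB : 0 < B)
    (hbound : ∀ n, (∫ z in Metric.ball (0 : ℂ) 1, u n z)
      ≤ B * ∫ z in Metric.ball (0 : ℂ) 1, u n z * Real.log (1 / ‖z‖)) :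
    ∀ M : ℝ, ∃ N : ℕ, ∀ n ≥ N, ∃ z ∈ Metric.ball (0 : ℂ) 1,
      M < (1 - ‖z‖ ^ 2) ^ 2 * u n z := by
  intro M
  set r : ℝ := Real.exp (-(1 / (2 * B))) with hrdef
  have hr0 : 0 < r := Real.exp_pos _
  have hr1 : r < 1 := by
    apply Real.exp_lt_one_iff.mpr
    have : 0 < 1 / (2 * B) := by positivity
    linarith
  have hlogr : Real.log (1 / r) = 1 / (2 * B) := by
    rw [one_div, Real.log_inv, hrdef, Real.log_exp, neg_neg]
  have hden : (0:ℝ) < (1 - r ^ 2) ^ 2 := by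
    have h2 : r ^ 2 < 1 := by nlinarith
    have : (0:ℝ) < 1 - r ^ 2 := by linarith
    positivity
  set c : ℝ := max M 0 / (1 - r ^ 2) ^ 2 with hcdef
  have hc0 : 0 ≤ c := div_nonneg (le_max_right M 0) hden.le
  set K : ℝ := ∫ z in Metric.ball (0:ℂ) 1, Real.log (1 / ‖z‖) with hKdef
  have hlog_nonneg : ∀ z ∈ Metric.ball (0:ℂ) 1, 0 ≤ Real.log (1 / ‖z‖) := by
    intro z hz
    rcases eq_or_ne z 0 with rfl | hz0
    · simp
    · apply Real.log_nonneg
      rw [le_div_iff₀ (norm_pos_iff.mpr hz0)]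
      rw [Metric.mem_ball, dist_zero_right] at hz
      linarith
  have hK0 : 0 ≤ K := by
    apply setIntegral_nonneg measurableSet_ball hlog_nonneg
  obtain ⟨N, hN⟩ := (tendsto_atTop.mp htau (2 * (c * K) + 1)).exists_forall_of_atTop
  refine ⟨N, fun n hn => ?_⟩
  by_contra hcon
  push_neg at hcon
  set τ : ℝ := ∫ z in Metric.ball (0:ℂ) 1, u n z * Real.log (1 / ‖z‖) with hτdef
  have hτ_lb : 2 * (c * K) + 1 ≤ τ := hN n hn
  set g : ℂ → ℝ := fun z => c * Real.log (1 / ‖z‖) + (2 * B)⁻¹ * u n z with hgdef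
  have hg_int : IntegrableOn g (Metric.ball (0:ℂ) 1) :=
    (integrableOn_log_inv_abs.const_mul c).add ((hint n).const_mul ((2 * B)⁻¹))
  have hmono : ∀ z ∈ Metric.ball (0:ℂ) 1,
      u n z * Real.log (1 / ‖z‖) ≤ g z := by
    intro z hz
    have hu0 := hpos n z hz
    have hl0 := hlog_nonneg z hz
    have habs : ‖z‖ < 1 := by
      rwa [Metric.mem_ball, dist_zero_right] at hz
    rcases le_or_gt (‖z‖) r with hcase | hcase
    · -- inner region : u n z ≤ c
      have huc : u n z ≤ c := by
        have h1 : (1 - ‖z‖ ^ 2) ^ 2 * u n z ≤ max M 0 :=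
          le_trans (hcon z hz) (le_max_left M 0)
        have h2 : (1 - r ^ 2) ^ 2 ≤ (1 - ‖z‖ ^ 2) ^ 2 := by
          have ha0 : 0 ≤ ‖z‖ := norm_nonneg z
          have hzr : ‖z‖ ^ 2 ≤ r ^ 2 := by nlinarith
          have hr2 : r ^ 2 < 1 := by nlinarith
          nlinarith [mul_nonneg (sub_nonneg.mpr hzr)
            (by nlinarith : (0:ℝ) ≤ 2 - ‖z‖ ^ 2 - r ^ 2)]
        have h3 : (1 - r ^ 2) ^ 2 * u n z ≤ max M 0 := by nlinarith
        rw [hcdef, le_div_iff₀ hden]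
        linarith [mul_comm ((1 - r ^ 2) ^ 2) (u n z)]
      have : u n z * Real.log (1 / ‖z‖) ≤ c * Real.log (1 / ‖z‖) := by
        apply mul_le_mul_of_nonneg_right huc hl0
      have hnn : 0 ≤ (2 * B)⁻¹ * u n z := by positivity
      rw [hgdef]; dsimp only; linarith
    · -- outer region : log small
      have hlle : Real.log (1 / ‖z‖) ≤ 1 / (2 * B) := by
        have habs0 : 0 < ‖z‖ := lt_trans hr0 hcase
        rw [← hlogr]
        apply Real.log_le_log (one_div_pos.mpr habs0)
        apply div_le_div_of_nonneg_left one_pos.le hr0 hcase.le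
      have h1 : u n z * Real.log (1 / ‖z‖) ≤ u n z * (1 / (2 * B)) :=
        mul_le_mul_of_nonneg_left hlle hu0
      have hcl : 0 ≤ c * Real.log (1 / ‖z‖) := mul_nonneg hc0 hl0
      have : u n z * (1 / (2 * B)) = (2 * B)⁻¹ * u n z := by ring
      rw [hgdef]; dsimp only; linarith
  have hf_nonneg : 0 ≤ᵐ[volume.restrict (Metric.ball (0:ℂ) 1)]
      fun z => u n z * Real.log (1 / ‖z‖) := by
    filter_upwards [ae_restrict_mem measurableSet_ball] with z hz
    exact mul_nonneg (hpos n z hz) (hlog_nonneg z hz)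
  have hle_ae : (fun z => u n z * Real.log (1 / ‖z‖))
      ≤ᵐ[volume.restrict (Metric.ball (0:ℂ) 1)] g := by
    filter_upwards [ae_restrict_mem measurableSet_ball] with z hz
    exact hmono z hz
  have key : τ ≤ ∫ z in Metric.ball (0:ℂ) 1, g z :=
    integral_mono_of_nonneg hf_nonneg hg_int hle_ae
  have hsplit : ∫ z in Metric.ball (0:ℂ) 1, g z
      = c * K + (2 * B)⁻¹ * ∫ z in Metric.ball (0:ℂ) 1, u n z := by
    rw [hgdef]
    rw [integral_add (integrableOn_log_inv_abs.const_mul c) ((hint n).const_mul ((2 * B)⁻¹))]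
    rw [integral_const_mul, integral_const_mul, hKdef]
  have ha_le : (2 * B)⁻¹ * (∫ z in Metric.ball (0:ℂ) 1, u n z) ≤ (2 * B)⁻¹ * (B * τ) := by
    apply mul_le_mul_of_nonneg_left (hbound n) (by positivity)
  have hBτ : (2 * B)⁻¹ * (B * τ) = τ / 2 := by field_simp
  have : τ ≤ c * K + τ / 2 := by
    calc τ ≤ c * K + (2 * B)⁻¹ * ∫ z in Metric.ball (0:ℂ) 1, u n z := by
          rw [← hsplit]; exact key
    _ ≤ c * K + τ / 2 := by rw [← hBτ]; linarith
  linarith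
end

section
/- Let (u_n) be a sequence of continuous integrable functions u_n : 𝔻 → [0,∞). Set τ_n = ∫_𝔻 u_n(z)·ln(1/|z|) dA(z) and a_n = ∫_𝔻 u_n dA. If τ_n → ∞ and a_n = o(τ_n) (i.e. a_n/τ_n → 0), then for every r ∈ (0,1) one has sup_{|z| ≤ r} u_n(z) → ∞ as n → ∞. (This is the first assertion of the paper's Proposition used to deduce non-Kobayashi-hyperbolicity, stated for u_n = |f_n'|².) -/
open MeasureTheory Filter

lemma integrableOn_inv_norm_ball :
    IntegrableOn (fun z : ℂ => ‖z‖⁻¹) (Metric.ball (0 : ℂ) 1) := by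
  have hm : Measurable fun z : ℂ => ‖z‖⁻¹ := measurable_norm.inv
  refine ⟨hm.aestronglyMeasurable, ?_⟩
  have hcover : Metric.ball (0 : ℂ) 1 ⊆
      {0} ∪ ⋃ k : ℕ, (Metric.ball (0 : ℂ) ((1/2 : ℝ)^k) \ Metric.ball 0 ((1/2 : ℝ)^(k+1))) := by
    intro z hz
    rcases eq_or_ne z 0 with rfl | hz0
    · exact Or.inl rfl
    right
    have hz1 : ‖z‖ < 1 := mem_ball_zero_iff.mp hz
    have hzpos : 0 < ‖z‖ := norm_pos_iff.mpr hz0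
    have hex : ∃ k : ℕ, (1/2 : ℝ)^(k+1) ≤ ‖z‖ := by
      obtain ⟨m, hm'⟩ := exists_pow_lt_of_lt_one hzpos (by norm_num : (1/2 : ℝ) < 1)
      exact ⟨m, le_of_lt (lt_of_le_of_lt (pow_le_pow_of_le_one (by norm_num) (by norm_num)
        (Nat.le_succ m)) hm')⟩
    have hfind := Nat.find_spec hex
    refine Set.mem_iUnion.mpr ⟨Nat.find hex, ⟨mem_ball_zero_iff.mpr ?_,
      fun hmem => absurd (mem_ball_zero_iff.mp hmem) (not_lt.mpr hfind)⟩⟩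
    cases hN : Nat.find hex with
    | zero => simpa using hz1
    | succ m =>
      have hm2 : m < Nat.find hex := by omega
      exact not_le.mp (Nat.find_min hex hm2)
  show (∫⁻ z in Metric.ball (0 : ℂ) 1, (‖(‖z‖⁻¹)‖₊ : ENNReal)) < ⊤
  calc ∫⁻ z in Metric.ball (0 : ℂ) 1, (‖(‖z‖⁻¹)‖₊ : ENNReal)
      ≤ ∫⁻ z in {0} ∪ ⋃ k : ℕ,
        (Metric.ball (0 : ℂ) ((1/2 : ℝ)^k) \ Metric.ball 0 ((1/2 : ℝ)^(k+1))),
        (‖(‖z‖⁻¹)‖₊ : ENNReal) := lintegral_mono_set hcover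
    _ ≤ (∫⁻ z in ({0} : Set ℂ), (‖(‖z‖⁻¹)‖₊ : ENNReal)) +
        ∫⁻ z in ⋃ k : ℕ,
        (Metric.ball (0 : ℂ) ((1/2 : ℝ)^k) \ Metric.ball 0 ((1/2 : ℝ)^(k+1))),
        (‖(‖z‖⁻¹)‖₊ : ENNReal) := lintegral_union_le _ _ _
    _ = ∫⁻ z in ⋃ k : ℕ,
        (Metric.ball (0 : ℂ) ((1/2 : ℝ)^k) \ Metric.ball 0 ((1/2 : ℝ)^(k+1))),
        (‖(‖z‖⁻¹)‖₊ : ENNReal) := by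
        rw [setLIntegral_measure_zero _ _ (measure_singleton _), zero_add]
    _ ≤ ∑' k : ℕ, ∫⁻ z in
        (Metric.ball (0 : ℂ) ((1/2 : ℝ)^k) \ Metric.ball 0 ((1/2 : ℝ)^(k+1))),
        (‖(‖z‖⁻¹)‖₊ : ENNReal) := lintegral_iUnion_le _ _
    _ ≤ ∑' k : ℕ, ENNReal.ofReal (2 * Real.pi * (1/2 : ℝ)^k) := by
        refine ENNReal.tsum_le_tsum fun k => ?_
        have hmeas : MeasurableSet
            (Metric.ball (0 : ℂ) ((1/2 : ℝ)^k) \ Metric.ball 0 ((1/2 : ℝ)^(k+1))) :=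
          measurableSet_ball.diff measurableSet_ball
        calc ∫⁻ z in
            (Metric.ball (0 : ℂ) ((1/2 : ℝ)^k) \ Metric.ball 0 ((1/2 : ℝ)^(k+1))),
            (‖(‖z‖⁻¹)‖₊ : ENNReal)
            ≤ ∫⁻ _ in
            (Metric.ball (0 : ℂ) ((1/2 : ℝ)^k) \ Metric.ball 0 ((1/2 : ℝ)^(k+1))),
            ENNReal.ofReal ((2 : ℝ)^(k+1)) := by
              refine setLIntegral_mono (by fun_prop) fun z hz => ?_
              have hzl : (1/2 : ℝ)^(k+1) ≤ ‖z‖ := by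
                by_contra hlt
                exact hz.2 (mem_ball_zero_iff.mpr (not_le.mp hlt))
              have hzpos : (0:ℝ) < ‖z‖ := lt_of_lt_of_le (by positivity) hzl
              rw [← enorm_eq_nnnorm, Real.enorm_eq_ofReal (by positivity)]
              refine ENNReal.ofReal_le_ofReal ?_
              have : ‖z‖⁻¹ ≤ ((1/2 : ℝ)^(k+1))⁻¹ :=
                inv_anti₀ (by positivity) hzl
              calc ‖z‖⁻¹ ≤ ((1/2 : ℝ)^(k+1))⁻¹ := this
                _ = (2:ℝ)^(k+1) := by rw [← inv_pow]; norm_num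
          _ = ENNReal.ofReal ((2 : ℝ)^(k+1)) *
              volume (Metric.ball (0 : ℂ) ((1/2 : ℝ)^k) \ Metric.ball 0 ((1/2 : ℝ)^(k+1))) :=
              setLIntegral_const _ _
          _ ≤ ENNReal.ofReal ((2 : ℝ)^(k+1)) * volume (Metric.ball (0 : ℂ) ((1/2 : ℝ)^k)) :=
              mul_le_mul_right (measure_mono Set.diff_subset) _
          _ = ENNReal.ofReal (2 * Real.pi * (1/2 : ℝ)^k) := by
              rw [Complex.volume_ball]
              rw [← ENNReal.ofReal_pow (by positivity), ← ENNReal.ofReal_coe_nnreal,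
                ← ENNReal.ofReal_mul (by positivity), ← ENNReal.ofReal_mul (by positivity)]
              have h2k : ((1:ℝ)/2)^k * 2^k = 1 := by rw [← mul_pow]; norm_num
              congr 1
              rw [NNReal.coe_real_pi]
              linear_combination (2 * Real.pi * ((1:ℝ)/2)^k) * h2k
    _ < ⊤ := by
        rw [← ENNReal.ofReal_tsum_of_nonneg (fun k => by positivity)
          (((summable_geometric_of_lt_one (by norm_num) (by norm_num)).mul_left _))]
        exact ENNReal.ofReal_lt_top

/-- If `u_n : 𝔻 → [0,∞)` are continuous and integrable,
`τ_n = ∫_𝔻 u_n(z)·ln(1/|z|) dA → ∞` and `a_n = ∫_𝔻 u_n dA = o(τ_n)`, then for every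
`r ∈ (0,1)` one has `sup_{|z| ≤ r} u_n(z) → ∞`. -/
theorem sup_on_compact_tendsto_atTop_of_area_littleO_tau
    (u : ℕ → ℂ → ℝ)
    (hc : ∀ n, ContinuousOn (u n) (Metric.ball (0 : ℂ) 1))
    (hpos : ∀ n, ∀ z ∈ Metric.ball (0 : ℂ) 1, 0 ≤ u n z)
    (hint : ∀ n, IntegrableOn (u n) (Metric.ball (0 : ℂ) 1))
    (htau : Tendsto
      (fun n => ∫ z in Metric.ball (0 : ℂ) 1, u n z * Real.log (1 / ‖z‖))
      atTop atTop)
    (hlittle : Tendsto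
      (fun n => (∫ z in Metric.ball (0 : ℂ) 1, u n z) /
        ∫ z in Metric.ball (0 : ℂ) 1, u n z * Real.log (1 / ‖z‖))
      atTop (nhds 0)) :
    ∀ r ∈ Set.Ioo (0 : ℝ) 1, ∀ M : ℝ, ∃ N : ℕ, ∀ n ≥ N, ∃ z : ℂ,
      ‖z‖ ≤ r ∧ M < u n z := by
  intro r hr M
  obtain ⟨hr0, hr1⟩ := hr
  by_contra hcon
  push_neg at hcon
  set M' : ℝ := max M 0 with hM'
  have hM'0 : 0 ≤ M' := le_max_right _ _
  set I : ℝ := ∫ z in Metric.ball (0 : ℂ) 1, ‖z‖⁻¹ with hI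
  have hI0 : 0 ≤ I := setIntegral_nonneg measurableSet_ball
    (fun z _ => inv_nonneg.mpr (norm_nonneg z))
  set Lr : ℝ := Real.log (1 / r) with hLrdef
  have hLr0 : 0 < Lr := Real.log_pos (by rw [lt_div_iff₀ hr0]; linarith)
  have hev1 : ∀ᶠ n in atTop,
      max (2 * M' * I) 0 < ∫ z in Metric.ball (0 : ℂ) 1,
        u n z * Real.log (1 / ‖z‖) := htau.eventually_gt_atTop _
  have hev2 : ∀ᶠ n in atTop,
      |(∫ z in Metric.ball (0 : ℂ) 1, u n z) /
        ∫ z in Metric.ball (0 : ℂ) 1, u n z * Real.log (1 / ‖z‖)| < 1 / (2 * Lr) := by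
    have h := Metric.tendsto_nhds.mp hlittle (1 / (2 * Lr)) (by positivity)
    refine h.mono fun n hn => ?_
    rwa [Real.dist_eq, sub_zero] at hn
  obtain ⟨N, hN⟩ := eventually_atTop.mp (hev1.and hev2)
  obtain ⟨n, hnN, hbound⟩ := hcon N
  obtain ⟨hτbig, hsmall⟩ := hN n hnN
  set τ : ℝ := ∫ z in Metric.ball (0 : ℂ) 1, u n z * Real.log (1 / ‖z‖) with hτdef
  set a : ℝ := ∫ z in Metric.ball (0 : ℂ) 1, u n z with hadef
  have hτpos : 0 < τ := lt_of_le_of_lt (le_max_right _ _) hτbig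
  -- integrability of the weighted integrand
  have hg_int : IntegrableOn (fun z => u n z * Real.log (1 / ‖z‖))
      (Metric.ball (0 : ℂ) 1) := by
    by_contra h
    rw [hτdef, integral_undef h] at hτpos
    exact lt_irrefl _ hτpos
  set s : Set ℂ := Metric.ball (0 : ℂ) 1 with hs
  set t : Set ℂ := Metric.closedBall (0 : ℂ) r with ht
  have hsplit : (∫ z in s ∩ t, u n z * Real.log (1 / ‖z‖)) +
      (∫ z in s \ t, u n z * Real.log (1 / ‖z‖)) = τ :=
    integral_inter_add_diff measurableSet_closedBall hg_int
  have ha0 : 0 ≤ a := setIntegral_nonneg measurableSet_ball (hpos n)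
  -- bound on the inner part
  have hA : (∫ z in s ∩ t, u n z * Real.log (1 / ‖z‖)) ≤ M' * I := by
    have hpt : ∀ z ∈ s ∩ t, u n z * Real.log (1 / ‖z‖) ≤ M' * ‖z‖⁻¹ := by
      rintro z ⟨hzs, hzt⟩
      have hzr : ‖z‖ ≤ r := by
        simpa [Complex.dist_eq] using Metric.mem_closedBall.mp hzt
      have huz : u n z ≤ M' := le_trans (hbound z hzr) (le_max_left _ _)
      have huz0 : 0 ≤ u n z := hpos n z hzs
      rcases eq_or_ne z 0 with rfl | hz0
      · simp
      have habs : 0 < ‖z‖ := norm_pos_iff.mpr hz0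
      have hlog0 : 0 ≤ Real.log (1 / ‖z‖) :=
        Real.log_nonneg (by rw [le_div_iff₀ habs]; simpa using le_trans hzr hr1.le)
      have hlogle : Real.log (1 / ‖z‖) ≤ ‖z‖⁻¹ := by
        have h1 : Real.log (1 / ‖z‖) ≤ 1 / ‖z‖ - 1 :=
          Real.log_le_sub_one_of_pos (by positivity)
        have : (1 : ℝ) / ‖z‖ = ‖z‖⁻¹ := by
          rw [one_div]
        linarith [this ▸ h1]
      calc u n z * Real.log (1 / ‖z‖) ≤ M' * Real.log (1 / ‖z‖) :=
            mul_le_mul_of_nonneg_right huz hlog0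
        _ ≤ M' * ‖z‖⁻¹ := mul_le_mul_of_nonneg_left hlogle hM'0
    have hint1 : IntegrableOn (fun z => u n z * Real.log (1 / ‖z‖)) (s ∩ t) :=
      hg_int.mono_set Set.inter_subset_left
    have hint2 : IntegrableOn (fun z : ℂ => M' * ‖z‖⁻¹) (s ∩ t) :=
      (integrableOn_inv_norm_ball.mono_set Set.inter_subset_left).const_mul M'
    calc (∫ z in s ∩ t, u n z * Real.log (1 / ‖z‖))
        ≤ ∫ z in s ∩ t, M' * ‖z‖⁻¹ :=
          setIntegral_mono_on hint1 hint2 (measurableSet_ball.inter measurableSet_closedBall) hpt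
      _ = M' * ∫ z in s ∩ t, ‖z‖⁻¹ := integral_const_mul _ _
      _ ≤ M' * I := by
          refine mul_le_mul_of_nonneg_left ?_ hM'0
          refine setIntegral_mono_set integrableOn_inv_norm_ball
            (ae_of_all _ (fun z => inv_nonneg.mpr (norm_nonneg z)))
            (HasSubset.Subset.eventuallyLE Set.inter_subset_left)
  -- bound on the outer part
  have hB : (∫ z in s \ t, u n z * Real.log (1 / ‖z‖)) ≤ Lr * a := by
    have hpt : ∀ z ∈ s \ t, u n z * Real.log (1 / ‖z‖) ≤ Lr * u n z := by
      rintro z ⟨hzs, hzt⟩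
      have hzr : r < ‖z‖ := by
        by_contra h
        exact hzt (Metric.mem_closedBall.mpr
          (by rw [Complex.dist_eq, sub_zero]; exact not_lt.mp h))
      have habs : 0 < ‖z‖ := lt_trans hr0 hzr
      have huz0 : 0 ≤ u n z := hpos n z hzs
      have hlogle : Real.log (1 / ‖z‖) ≤ Lr := by
        rw [hLrdef]
        exact Real.log_le_log (by positivity)
          (div_le_div_of_nonneg_left one_pos.le hr0 hzr.le)
      calc u n z * Real.log (1 / ‖z‖) ≤ u n z * Lr :=
            mul_le_mul_of_nonneg_left hlogle huz0
        _ = Lr * u n z := mul_comm _ _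
    have hint1 : IntegrableOn (fun z => u n z * Real.log (1 / ‖z‖)) (s \ t) :=
      hg_int.mono_set Set.diff_subset
    have hint2 : IntegrableOn (fun z : ℂ => Lr * u n z) (s \ t) :=
      ((hint n).mono_set Set.diff_subset).const_mul Lr
    calc (∫ z in s \ t, u n z * Real.log (1 / ‖z‖))
        ≤ ∫ z in s \ t, Lr * u n z :=
          setIntegral_mono_on hint1 hint2 (measurableSet_ball.diff measurableSet_closedBall) hpt
      _ = Lr * ∫ z in s \ t, u n z := integral_const_mul _ _
      _ ≤ Lr * a := by
          refine mul_le_mul_of_nonneg_left ?_ hLr0.le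
          refine setIntegral_mono_set (hint n)
            (ae_restrict_of_forall_mem measurableSet_ball (hpos n))
            (HasSubset.Subset.eventuallyLE Set.diff_subset)
  -- a is small compared to τ
  have haτ : a < τ / (2 * Lr) := by
    have h1 : a / τ < 1 / (2 * Lr) := lt_of_le_of_lt (le_abs_self _) hsmall
    have h2 : a < 1 / (2 * Lr) * τ := (div_lt_iff₀ hτpos).mp h1
    calc a < 1 / (2 * Lr) * τ := h2
      _ = τ / (2 * Lr) := by ring
  have hLa : Lr * a < τ / 2 := by
    have := mul_lt_mul_of_pos_left haτ hLr0
    calc Lr * a < Lr * (τ / (2 * Lr)) := this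
      _ = τ / 2 := by field_simp
  have hτle : τ ≤ 2 * M' * I := by nlinarith [hsplit, hA, hB, hLa]
  have : max (2 * M' * I) 0 < 2 * M' * I := lt_of_lt_of_le hτbig hτle
  exact absurd this (not_lt.mpr (le_max_left _ _))
end

section
/- Fix x₀ ∈ ℂⁿ and let (f_n) be holomorphic maps f_n : 𝔻 → ℂⁿ with f_n(0) = x₀ and area(f_n) finite. Assume τ(f_n) → ∞ and area(f_n) = o(τ(f_n)). Then for every bounded subset V₀ ⊆ ℂⁿ and every r ∈ (0,1), there exists N such that for all n ≥ N the image f_n(𝔻_r) is not contained in V₀. (This is the escape lemma in the proof of the paper's Proposition on non-Kobayashi-hyperbolicity, in the case of the standard Stein structure ψ(z) = ‖z‖²/4 on ℂⁿ.) -/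
open MeasureTheory Filter

lemma aux_log_Ioc {s : ℝ} (hs : 0 < s) (hs1 : s ≤ 1) :
    IntegrableOn (fun x : ℝ => Real.log (1/|x|)) (Set.Ioc 0 s) := by
  have hmeas : Measurable fun x : ℝ => Real.log (1/|x|) :=
    Real.measurable_log.comp (measurable_const.div _root_.continuous_abs.measurable)
  have hint : IntegrableOn (fun x : ℝ => 2 * x ^ (-(1/2) : ℝ)) (Set.Ioc 0 s) := by
    have h := intervalIntegral.intervalIntegrable_rpow' (a := 0) (b := s)
      (r := (-(1/2):ℝ)) (by norm_num)
    rw [intervalIntegrable_iff_integrableOn_Ioc_of_le hs.le] at h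
    exact h.const_mul 2
  apply Integrable.mono' hint hmeas.aestronglyMeasurable
  filter_upwards [ae_restrict_mem measurableSet_Ioc] with x hx
  obtain ⟨hx0, hxs⟩ := hx
  rw [abs_of_pos hx0]
  have h1 : (0:ℝ) ≤ Real.log (1/x) := Real.log_nonneg (by
    rw [le_div_iff₀ hx0]; linarith)
  rw [Real.norm_eq_abs, abs_of_nonneg h1]
  have h2 : Real.log (1/x) = 2 * Real.log (x ^ (-(1/2):ℝ)) := by
    rw [Real.log_rpow hx0, Real.log_div one_ne_zero (ne_of_gt hx0), Real.log_one]; ring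
  rw [h2]
  have h3 : Real.log (x ^ (-(1/2):ℝ)) ≤ x ^ (-(1/2):ℝ) :=
    (Real.log_le_sub_one_of_pos (Real.rpow_pos_of_pos hx0 _)).trans (by linarith)
  linarith

lemma aux_log_Icc {s : ℝ} (hs : 0 < s) (hs1 : s ≤ 1) :
    IntegrableOn (fun x : ℝ => Real.log (1/|x|)) (Set.Icc (-s) s) := by
  have h1 := aux_log_Ioc hs hs1
  have h2 : IntegrableOn (fun x : ℝ => Real.log (1/|x|)) (Set.Ico (-s) 0) := by
    have h := (MeasurePreserving.integrableOn_comp_preimage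
      (Measure.measurePreserving_neg (volume : Measure ℝ))
      (Homeomorph.neg ℝ).measurableEmbedding).2 h1
    have he : (Neg.neg ⁻¹' Set.Ioc (0:ℝ) s) = Set.Ico (-s) 0 := by
      ext x; simp only [Set.mem_preimage, Set.mem_Ioc, Set.mem_Ico]; constructor <;> (intro h; exact ⟨by linarith [h.1, h.2], by linarith [h.1, h.2]⟩)
    rw [he] at h
    refine h.congr_fun (fun x _ => ?_) measurableSet_Ico
    simp [Function.comp, abs_neg]
  have h3 : IntegrableOn (fun x : ℝ => Real.log (1/|x|)) ({0} : Set ℝ) := by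
    rw [IntegrableOn, Measure.restrict_eq_zero.mpr (by simp)]
    exact integrable_zero_measure
  have hsub : Set.Icc (-s) s ⊆ Set.Ico (-s) 0 ∪ ({0} : Set ℝ) ∪ Set.Ioc 0 s := by
    intro x hx
    rcases lt_trichotomy x 0 with h | h | h
    · exact Or.inl (Or.inl ⟨hx.1, h⟩)
    · exact Or.inl (Or.inr (by simp [h]))
    · exact Or.inr ⟨h, hx.2⟩
  exact ((h2.union h3).union h1).mono_set hsub

noncomputable def auxDom (s : ℝ) : ℂ → ℝ := fun z =>
  (Set.Icc (-s) s).indicator (fun x => Real.log (1/|x|)) z.re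
    * (Set.Icc (-s) s).indicator (fun _ => 1) z.im
  + (Set.Icc (-s) s).indicator (fun _ => 1) z.re
    * (Set.Icc (-s) s).indicator (fun x => Real.log (1/|x|)) z.im

lemma aux_integrable_dom {s : ℝ} (hs : 0 < s) (hs1 : s ≤ 1) :
    Integrable (auxDom s) (volume : Measure ℂ) := by
  have hL : Integrable ((Set.Icc (-s) s).indicator (fun x => Real.log (1/|x|)))
      (volume : Measure ℝ) :=
    (aux_log_Icc hs hs1).integrable_indicator measurableSet_Icc
  have h1 : Integrable ((Set.Icc (-s) s).indicator (fun _ : ℝ => (1:ℝ)))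
      (volume : Measure ℝ) := by
    rw [integrable_indicator_iff measurableSet_Icc]
    exact integrableOn_const measure_Icc_lt_top.ne
  have hP : Integrable (fun p : ℝ × ℝ =>
      (Set.Icc (-s) s).indicator (fun x => Real.log (1/|x|)) p.1
        * (Set.Icc (-s) s).indicator (fun _ => 1) p.2
      + (Set.Icc (-s) s).indicator (fun _ => 1) p.1
        * (Set.Icc (-s) s).indicator (fun x => Real.log (1/|x|)) p.2)
      (volume : Measure (ℝ × ℝ)) := by
    rw [Measure.volume_eq_prod]
    exact (hL.mul_prod h1).add (h1.mul_prod hL)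
  have := (Complex.volume_preserving_equiv_real_prod.integrable_comp_emb
    (MeasurableEquiv.measurableEmbedding _)).2 hP
  exact this

lemma aux_log_bound {s : ℝ} (hs1 : s ≤ 1) {z : ℂ} (hz : ‖z‖ < s) :
    Real.log (1/‖z‖) ≤ auxDom s z := by
  have ha : |z.re| ≤ ‖z‖ := Complex.abs_re_le_norm z
  have hb : |z.im| ≤ ‖z‖ := Complex.abs_im_le_norm z
  have hmem_re : z.re ∈ Set.Icc (-s) s := abs_le.1 (by linarith)
  have hmem_im : z.im ∈ Set.Icc (-s) s := abs_le.1 (by linarith)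
  have hD : auxDom s z = Real.log (1/|z.re|) + Real.log (1/|z.im|) := by
    unfold auxDom
    rw [Set.indicator_of_mem hmem_re, Set.indicator_of_mem hmem_im,
      Set.indicator_of_mem hmem_re, Set.indicator_of_mem hmem_im]
    ring
  rw [hD]
  have him_nonneg : 0 ≤ Real.log (1/|z.im|) := by
    rcases eq_or_ne z.im 0 with h | h
    · simp [h]
    · apply Real.log_nonneg
      rw [le_div_iff₀ (abs_pos.2 h)]
      nlinarith [abs_pos.2 h]
  rcases eq_or_ne z.re 0 with h | h
  · have habs : ‖z‖ = |z.im| := by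
      refine le_antisymm ?_ hb
      calc ‖z‖ ≤ |z.re| + |z.im| := Complex.norm_le_abs_re_add_abs_im z
      _ = |z.im| := by simp [h]
    rw [habs, h]
    simp
  · have hre_pos : 0 < |z.re| := abs_pos.2 h
    have habs_pos : 0 < ‖z‖ := lt_of_lt_of_le hre_pos ha
    have : Real.log (1/‖z‖) ≤ Real.log (1/|z.re|) := by
      rw [Real.log_le_log_iff (by positivity) (by positivity)]
      exact one_div_le_one_div_of_le hre_pos ha
    linarith

lemma aux_tau_bound {m : ℕ} {F : ℂ → EuclideanSpace ℂ (Fin m)} {r s R : ℝ}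
    (hF : DifferentiableOn ℂ F (Metric.ball 0 1))
    (hFi : IntegrableOn (fun z => ‖deriv F z‖ ^ 2) (Metric.ball (0:ℂ) 1))
    (hr : r < 1) (hs : 0 < s) (hsr : s < r)
    (hR : 0 ≤ R)
    (himg : ∀ z ∈ Metric.ball (0:ℂ) r,
      F z ∈ Metric.closedBall (0 : EuclideanSpace ℂ (Fin m)) R) :
    (∫ z in Metric.ball (0:ℂ) 1, ‖deriv F z‖ ^ 2 * Real.log (1/‖z‖))
      ≤ ((2*R+1)/(r-s))^2 * (∫ z in Metric.ball (0:ℂ) s, auxDom s z)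
        + Real.log (1/s) * ∫ z in Metric.ball (0:ℂ) 1, ‖deriv F z‖ ^ 2 := by
  have hs1 : s ≤ 1 := by linarith
  have hrs : 0 < r - s := by linarith
  set K : ℝ := ((2*R+1)/(r-s))^2 with hK
  have hK0 : 0 ≤ K := sq_nonneg _
  set g : ℂ → ℝ := fun z => ‖deriv F z‖ ^ 2 with hg
  set L : ℂ → ℝ := fun z => Real.log (1/‖z‖) with hL
  have hg_nonneg : ∀ z, 0 ≤ g z := fun z => sq_nonneg _
  have hL_nonneg : ∀ z ∈ Metric.ball (0:ℂ) 1, 0 ≤ L z := by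
    intro z hz
    rcases eq_or_ne z 0 with h | h
    · simp [hL, h]
    · apply Real.log_nonneg
      rw [le_div_iff₀ (norm_pos_iff.mpr h)]
      rw [Metric.mem_ball, Complex.dist_eq, sub_zero] at hz
      linarith
  -- derivative bound on ball s
  have hderiv : ∀ z ∈ Metric.ball (0:ℂ) s, ‖deriv F z‖ ≤ (2*R+1)/(r-s) := by
    intro z hz
    rw [Metric.mem_ball, Complex.dist_eq, sub_zero] at hz
    have hball : Metric.ball z (r-s) ⊆ Metric.ball (0:ℂ) r := by
      apply Metric.ball_subset_ball'
      rw [Complex.dist_eq, sub_zero]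
      linarith
    apply Complex.norm_deriv_le_div_of_mapsTo_ball
      (hF.mono (hball.trans (Metric.ball_subset_ball hr.le)))
      ?_ hrs
    intro w hw
    have h1 := himg w (hball hw)
    have h2 := himg z (hball (Metric.mem_ball_self hrs))
    rw [Metric.mem_closedBall, dist_zero_right] at h1 h2
    rw [Metric.mem_closedBall]
    refine le_of_lt ?_
    calc dist (F w) (F z) ≤ ‖F w‖ + ‖F z‖ := dist_le_norm_add_norm _ _
    _ ≤ 2*R := by linarith
    _ < 2*R+1 := by linarith
  have hgK : ∀ z ∈ Metric.ball (0:ℂ) s, g z ≤ K := by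
    intro z hz
    exact pow_le_pow_left₀ (norm_nonneg _) (hderiv z hz) 2
  -- measurability
  have hg_cont : ContinuousOn g (Metric.ball (0:ℂ) 1) := by
    have := ((hF.analyticOnNhd Metric.isOpen_ball).deriv).continuousOn
    exact (this.norm).pow 2
  have hL_meas : Measurable L :=
    Real.measurable_log.comp (measurable_const.div (continuous_norm.measurable))
  have hgL_meas : AEStronglyMeasurable (fun z => g z * L z)
      ((volume : Measure ℂ).restrict (Metric.ball (0:ℂ) 1)) :=
    (hg_cont.aestronglyMeasurable measurableSet_ball).mul
      hL_meas.aestronglyMeasurable.restrict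
  have hsub : Metric.ball (0:ℂ) s ⊆ Metric.ball (0:ℂ) 1 :=
    Metric.ball_subset_ball hs1
  -- inner integral
  have hdom_int : IntegrableOn (fun z => K * auxDom s z) (Metric.ball (0:ℂ) s) :=
    ((aux_integrable_dom hs hs1).const_mul K).integrableOn
  have hbound_pt : ∀ z ∈ Metric.ball (0:ℂ) s, g z * L z ≤ K * auxDom s z := by
    intro z hz
    have hzs : ‖z‖ < s := by
      rw [Metric.mem_ball, Complex.dist_eq, sub_zero] at hz; exact hz
    have h1 := aux_log_bound hs1 hzs
    have h2 := hL_nonneg z (hsub hz)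
    have h3 := hgK z hz
    nlinarith [hg_nonneg z]
  have hint_inner : IntegrableOn (fun z => g z * L z) (Metric.ball (0:ℂ) s) := by
    apply Integrable.mono' hdom_int
      (hgL_meas.mono_measure (Measure.restrict_mono hsub le_rfl))
    filter_upwards [ae_restrict_mem measurableSet_ball] with z hz
    rw [Real.norm_eq_abs, abs_of_nonneg (mul_nonneg (hg_nonneg z) (hL_nonneg z (hsub hz)))]
    exact hbound_pt z hz
  have hbound_inner : (∫ z in Metric.ball (0:ℂ) s, g z * L z)
      ≤ K * ∫ z in Metric.ball (0:ℂ) s, auxDom s z := by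
    rw [← MeasureTheory.integral_const_mul]
    exact setIntegral_mono_on hint_inner hdom_int measurableSet_ball hbound_pt
  -- annulus
  set Ann : Set ℂ := Metric.ball (0:ℂ) 1 \ Metric.ball (0:ℂ) s with hAnn
  have hg_ann : IntegrableOn g Ann := hFi.mono_set Set.diff_subset
  have hlog_nonneg : 0 ≤ Real.log (1/s) := by
    apply Real.log_nonneg
    rw [le_div_iff₀ hs]; linarith
  have hL_ann : ∀ z ∈ Ann, L z ≤ Real.log (1/s) := by
    intro z hz
    have h1 : s ≤ ‖z‖ := by
      have := hz.2
      rw [Metric.mem_ball, Complex.dist_eq, sub_zero, not_lt] at this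
      exact this
    rw [hL]
    rw [Real.log_le_log_iff (one_div_pos.2 (lt_of_lt_of_le hs h1)) (one_div_pos.2 hs)]
    exact one_div_le_one_div_of_le hs h1
  have hint_ann : IntegrableOn (fun z => g z * L z) Ann := by
    apply Integrable.mono' (hg_ann.const_mul (Real.log (1/s)))
      (hgL_meas.mono_measure (Measure.restrict_mono Set.diff_subset le_rfl))
    filter_upwards [ae_restrict_mem (measurableSet_ball.diff measurableSet_ball)]
      with z hz
    rw [Real.norm_eq_abs, abs_of_nonneg (mul_nonneg (hg_nonneg z) (hL_nonneg z hz.1))]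
    calc g z * L z ≤ g z * Real.log (1/s) :=
          mul_le_mul_of_nonneg_left (hL_ann z hz) (hg_nonneg z)
    _ = Real.log (1/s) * g z := mul_comm _ _
  have hbound_ann : (∫ z in Ann, g z * L z)
      ≤ Real.log (1/s) * ∫ z in Metric.ball (0:ℂ) 1, g z := by
    calc (∫ z in Ann, g z * L z) ≤ ∫ z in Ann, Real.log (1/s) * g z := by
          apply setIntegral_mono_on hint_ann (hg_ann.const_mul _)
            (measurableSet_ball.diff measurableSet_ball)
          intro z hz
          calc g z * L z ≤ g z * Real.log (1/s) :=
                mul_le_mul_of_nonneg_left (hL_ann z hz) (hg_nonneg z)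
          _ = Real.log (1/s) * g z := mul_comm _ _
    _ = Real.log (1/s) * ∫ z in Ann, g z := MeasureTheory.integral_const_mul _ _
    _ ≤ Real.log (1/s) * ∫ z in Metric.ball (0:ℂ) 1, g z := by
          apply mul_le_mul_of_nonneg_left _ hlog_nonneg
          apply setIntegral_mono_set hFi
          · filter_upwards with z; exact hg_nonneg z
          · exact HasSubset.Subset.eventuallyLE Set.diff_subset
  -- splitting
  have hsplit : (∫ z in Metric.ball (0:ℂ) 1, g z * L z)
      = (∫ z in Metric.ball (0:ℂ) s, g z * L z) + ∫ z in Ann, g z * L z := by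
    have hall : IntegrableOn (fun z => g z * L z) (Metric.ball (0:ℂ) 1) := by
      have := hint_inner.union hint_ann
      rwa [Set.union_diff_cancel hsub] at this
    rw [← MeasureTheory.integral_inter_add_diff measurableSet_ball hall,
      Set.inter_eq_self_of_subset_right hsub]
  calc (∫ z in Metric.ball (0:ℂ) 1, g z * L z)
      = (∫ z in Metric.ball (0:ℂ) s, g z * L z) + ∫ z in Ann, g z * L z := hsplit
  _ ≤ K * (∫ z in Metric.ball (0:ℂ) s, auxDom s z)
      + Real.log (1/s) * ∫ z in Metric.ball (0:ℂ) 1, g z :=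
    add_le_add hbound_inner hbound_ann


/-- **escape lemma.** Fix `x₀ ∈ ℂⁿ` and let `f_n : 𝔻 → ℂⁿ` be holomorphic
with `f_n(0) = x₀` and finite area. If `τ(f_n) → ∞` and `area(f_n) = o(τ(f_n))`, then
for every bounded `V₀ ⊆ ℂⁿ` and every `r ∈ (0,1)`, eventually `f_n(𝔻_r) ⊄ V₀`. -/
theorem image_eventually_not_subset_bounded_of_area_littleO_tau
    (m : ℕ) (x₀ : EuclideanSpace ℂ (Fin m)) (f : ℕ → ℂ → EuclideanSpace ℂ (Fin m))
    (hf : ∀ n, DifferentiableOn ℂ (f n) (Metric.ball (0 : ℂ) 1))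
    (h0 : ∀ n, f n 0 = x₀)
    (harea : ∀ n, IntegrableOn (fun z => ‖deriv (f n) z‖ ^ 2) (Metric.ball (0 : ℂ) 1))
    (htau : Tendsto
      (fun n => ∫ z in Metric.ball (0 : ℂ) 1,
        ‖deriv (f n) z‖ ^ 2 * Real.log (1 / ‖z‖)) atTop atTop)
    (hlittle : Tendsto
      (fun n => (∫ z in Metric.ball (0 : ℂ) 1, ‖deriv (f n) z‖ ^ 2) /
        ∫ z in Metric.ball (0 : ℂ) 1,
          ‖deriv (f n) z‖ ^ 2 * Real.log (1 / ‖z‖))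
      atTop (nhds 0)) :
    ∀ V₀ : Set (EuclideanSpace ℂ (Fin m)), Bornology.IsBounded V₀ →
      ∀ r ∈ Set.Ioo (0 : ℝ) 1, ∃ N : ℕ, ∀ n ≥ N,
        ¬ (f n '' Metric.ball (0 : ℂ) r ⊆ V₀) := by
  intro V₀ hV₀ r hr
  obtain ⟨hr0, hr1⟩ := hr
  obtain ⟨R₀, hR₀⟩ := hV₀.subset_closedBall (0 : EuclideanSpace ℂ (Fin m))
  set R : ℝ := max R₀ 0 with hRdef
  have hR : 0 ≤ R := le_max_right _ _
  have hRV : V₀ ⊆ Metric.closedBall (0 : EuclideanSpace ℂ (Fin m)) R :=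
    hR₀.trans (Metric.closedBall_subset_closedBall (le_max_left _ _))
  set s : ℝ := r/2 with hsdef
  have hs : 0 < s := by positivity
  have hsr : s < r := by simp only [hsdef]; linarith
  have hs1 : s < 1 := by linarith
  set A : ℕ → ℝ := fun n => ∫ z in Metric.ball (0 : ℂ) 1, ‖deriv (f n) z‖ ^ 2 with hA
  set T : ℕ → ℝ := fun n => ∫ z in Metric.ball (0 : ℂ) 1,
    ‖deriv (f n) z‖ ^ 2 * Real.log (1 / ‖z‖) with hT
  set C : ℝ := ((2*R+1)/(r-s))^2 * ∫ z in Metric.ball (0:ℂ) s, auxDom s z with hC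
  have hlog : 0 < Real.log (1/s) := by
    apply Real.log_pos
    rw [lt_div_iff₀ hs]; linarith
  set ε : ℝ := 1 / (2 * Real.log (1/s)) with hε
  have hεpos : 0 < ε := by positivity
  have h1 : ∀ᶠ n in atTop, max (2*C) 0 < T n := htau.eventually_gt_atTop _
  have h2 : ∀ᶠ n in atTop, |A n / T n| < ε := by
    have := Metric.tendsto_nhds.mp hlittle ε hεpos
    filter_upwards [this] with n hn
    rwa [Real.dist_eq, sub_zero] at hn
  obtain ⟨N, hN⟩ := (h1.and h2).exists_forall_of_atTop
  refine ⟨N, fun n hn hPn => ?_⟩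
  obtain ⟨hTn, hATn⟩ := hN n hn
  have hTpos : 0 < T n := lt_of_le_of_lt (le_max_right _ _) hTn
  have hT2C : 2*C < T n := lt_of_le_of_lt (le_max_left _ _) hTn
  have himg : ∀ z ∈ Metric.ball (0:ℂ) r,
      f n z ∈ Metric.closedBall (0 : EuclideanSpace ℂ (Fin m)) R :=
    fun z hz => hRV (hPn ⟨z, hz, rfl⟩)
  have key := aux_tau_bound (hf n) (harea n) hr1 hs hsr hR himg
  have hAn_nonneg : 0 ≤ A n := by
    apply setIntegral_nonneg measurableSet_ball
    intro z _; positivity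
  have hAT : A n < ε * T n := by
    have := lt_of_abs_lt hATn
    rwa [div_lt_iff₀ hTpos] at this
  have hhalf : Real.log (1/s) * A n < T n / 2 := by
    have : Real.log (1/s) * A n < Real.log (1/s) * (ε * T n) :=
      mul_lt_mul_of_pos_left hAT hlog
    have heq : Real.log (1/s) * (ε * T n) = T n / 2 := by
      rw [hε]; field_simp
    linarith
  have : T n ≤ C + Real.log (1/s) * A n := key
  linarith
end

section
/- Let f : 𝔻 → ℂⁿ be holomorphic with area(f) finite, and let r ∈ (0,1). Then sup_{|z| ≤ r} ‖f'(z)‖ ≥ (1/r)·L − (√(π(1−r²))/(2π r²))·(area(f))^{1/2}, where L = liminf_{|z| → 1} ‖f(z) − f(0)‖. (This is the paper's Brody-type derivative lower bound for pseudo-holomorphic disks, in the case of the standard Kähler structure on ℂⁿ.) -/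
open MeasureTheory Filter

theorem my_lintegral_polarCoord_symm (f : ℝ × ℝ → ENNReal) :
    (∫⁻ p in polarCoord.target, ENNReal.ofReal p.1 * f (polarCoord.symm p)) = ∫⁻ p, f p := by
  set B : ℝ × ℝ → ℝ × ℝ →L[ℝ] ℝ × ℝ := fun p =>
    LinearMap.toContinuousLinearMap (Matrix.toLin (Module.Basis.finTwoProd ℝ) (Module.Basis.finTwoProd ℝ)
      !![Real.cos p.2, -p.1 * Real.sin p.2; Real.sin p.2, p.1 * Real.cos p.2])
  have A : ∀ p ∈ polarCoord.symm.source, HasFDerivAt polarCoord.symm (B p) p := fun p _ =>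
    hasFDerivAt_polarCoord_symm p
  have B_det : ∀ p, (B p).det = p.1 := by
    intro p
    conv_rhs => rw [← one_mul p.1, ← Real.cos_sq_add_sin_sq p.2]
    simp only [B, neg_mul, LinearMap.det_toContinuousLinearMap, LinearMap.det_toLin,
      Matrix.det_fin_two_of, sub_neg_eq_add]
    ring
  symm
  calc
    ∫⁻ p, f p = ∫⁻ p in polarCoord.source, f p := by
      rw [← setLIntegral_univ]
      exact setLIntegral_congr polarCoord_source_ae_eq_univ.symm
    _ = ∫⁻ p in polarCoord.symm '' polarCoord.target, f p := by
      rw [polarCoord.symm_image_target_eq_source]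
    _ = ∫⁻ p in polarCoord.target, ENNReal.ofReal |(B p).det| * f (polarCoord.symm p) := by
      apply lintegral_image_eq_lintegral_abs_det_fderiv_mul volume
        polarCoord.open_target.measurableSet
        (fun p hp => (A p hp).hasFDerivWithinAt)
        polarCoord.symm.injOn
    _ = ∫⁻ p in polarCoord.target, ENNReal.ofReal p.1 * f (polarCoord.symm p) := by
      refine setLIntegral_congr_fun polarCoord.open_target.measurableSet
        (fun x hx => ?_)
      rw [B_det, abs_of_pos hx.1]

theorem my_complex_lintegral_polarCoord_symm (f : ℂ → ENNReal) (hf : Measurable f) :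
    (∫⁻ p in polarCoord.target, ENNReal.ofReal p.1 * f (Complex.polarCoord.symm p))
      = ∫⁻ z, f z := by
  rw [← (Complex.volume_preserving_equiv_real_prod.symm).lintegral_comp hf,
    ← my_lintegral_polarCoord_symm (fun p => f (Complex.measurableEquivRealProd.symm p))]
  rfl

/-- **Brody-type derivative lower bound.** For `f : 𝔻 → ℂⁿ` holomorphic
with finite area and `r ∈ (0,1)`,
`sup_{|z| ≤ r} ‖f'(z)‖ ≥ (1/r)·L − (√(π(1−r²))/(2π r²))·(area f)^{1/2}`,
where `L = liminf_{s ↗ 1} inf_{s ≤ |z| < 1} ‖f(z) − f(0)‖`. -/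
theorem sup_deriv_ge_of_liminf_dist
    (m : ℕ) (f : ℂ → EuclideanSpace ℂ (Fin m))
    (hf : DifferentiableOn ℂ f (Metric.ball (0 : ℂ) 1))
    (harea : IntegrableOn (fun z => ‖deriv f z‖ ^ 2) (Metric.ball (0 : ℂ) 1))
    (r : ℝ) (hr : r ∈ Set.Ioo (0 : ℝ) 1)
    (L : ℝ)
    (hL : L = Filter.liminf
      (fun s : ℝ => sInf ((fun z : ℂ => ‖f z - f 0‖) ''
        {z : ℂ | s ≤ ‖z‖ ∧ ‖z‖ < 1}))
      (nhdsWithin (1 : ℝ) (Set.Iio 1))) :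
    (⨆ z : Metric.closedBall (0 : ℂ) r, ‖deriv f (z : ℂ)‖)
      ≥ (1 / r) * L
        - (Real.sqrt (Real.pi * (1 - r ^ 2)) / (2 * Real.pi * r ^ 2))
          * Real.sqrt (∫ z in Metric.ball (0 : ℂ) 1, ‖deriv f z‖ ^ 2) := by
  obtain ⟨hr0, hr1⟩ := hr
  have hπ := Real.pi_pos
  have h1r2 : (0:ℝ) ≤ 1 - r ^ 2 := by nlinarith
  set A := ∫ z in Metric.ball (0:ℂ) 1, ‖deriv f z‖ ^ 2 with hAdef
  have hA0 : 0 ≤ A := setIntegral_nonneg measurableSet_ball (fun z _ => sq_nonneg _)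
  set B := Real.sqrt (Real.pi * (1 - r ^ 2)) * Real.sqrt A with hBdef
  have hB0 : 0 ≤ B := mul_nonneg (Real.sqrt_nonneg _) (Real.sqrt_nonneg _)
  -- continuity of the derivative
  have hcont : ContinuousOn (deriv f) (Metric.ball (0:ℂ) 1) :=
    ((hf.analyticOnNhd Metric.isOpen_ball).deriv).continuousOn
  -- the sup M
  set M := ⨆ z : Metric.closedBall (0:ℂ) r, ‖deriv f (z:ℂ)‖ with hMdef
  have hball : Metric.closedBall (0:ℂ) r ⊆ Metric.ball 0 1 :=
    Metric.closedBall_subset_ball hr1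
  obtain ⟨C, hC⟩ := (isCompact_closedBall (0:ℂ) r).exists_bound_of_continuousOn
    (hcont.mono hball)
  have hbdd : BddAbove (Set.range fun z : Metric.closedBall (0:ℂ) r => ‖deriv f (z:ℂ)‖) := by
    refine ⟨C, ?_⟩
    rintro x ⟨⟨z, hz⟩, rfl⟩
    exact hC z hz
  have hM : ∀ z : ℂ, ‖z‖ ≤ r → ‖deriv f z‖ ≤ M := by
    intro z hz
    exact le_ciSup hbdd (⟨z, by simpa [Metric.mem_closedBall, Complex.dist_eq] using hz⟩ :
      Metric.closedBall (0:ℂ) r)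
  -- the annulus
  set S : Set ℂ := {z : ℂ | r ≤ ‖z‖ ∧ ‖z‖ < 1} with hSdef
  have hSeq : S = Metric.ball (0:ℂ) 1 \ Metric.ball (0:ℂ) r := by
    ext z
    simp only [hSdef, Set.mem_setOf_eq, Set.mem_diff, Metric.mem_ball, Complex.dist_eq, sub_zero,
      not_lt]
    tauto
  have hSmeas : MeasurableSet S := by
    rw [hSeq]; exact measurableSet_ball.diff measurableSet_ball
  have hSsub : S ⊆ Metric.ball (0:ℂ) 1 := by rw [hSeq]; exact Set.diff_subset
  have hpinn : ((NNReal.pi : ENNReal)) = ENNReal.ofReal Real.pi := by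
    rw [← ENNReal.ofReal_coe_nnreal, NNReal.coe_real_pi]
  have hvolS : volume S = ENNReal.ofReal (Real.pi * (1 - r ^ 2)) := by
    rw [hSeq, measure_diff (Metric.ball_subset_ball hr1.le)
      measurableSet_ball.nullMeasurableSet measure_ball_lt_top.ne,
      Complex.volume_ball, Complex.volume_ball, hpinn,
      ← ENNReal.ofReal_pow hr0.le, ← ENNReal.ofReal_pow zero_le_one,
      ← ENNReal.ofReal_mul (by positivity), ← ENNReal.ofReal_mul (by positivity),
      ← ENNReal.ofReal_sub _ (by positivity)]
    congr 1
    ring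
  -- the function G and its integral T
  letI : MeasurableSpace (EuclideanSpace ℂ (Fin m)) := borel _
  haveI : BorelSpace (EuclideanSpace ℂ (Fin m)) := ⟨rfl⟩
  have hmd : Measurable (deriv f) := measurable_deriv f
  set G : ℂ → ENNReal := S.indicator (fun z => ENNReal.ofReal ‖deriv f z‖) with hGdef
  have hGmeas : Measurable G := (hmd.norm.ennreal_ofReal).indicator hSmeas
  set T := ∫⁻ z, G z with hTdef
  have hT : T = ∫⁻ z in S, ENNReal.ofReal ‖deriv f z‖ := by
    rw [hTdef, hGdef, lintegral_indicator hSmeas]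
  have harea' : IntegrableOn (fun z => ‖deriv f z‖ ^ 2) S := harea.mono_set hSsub
  -- Cauchy-Schwarz: T ≤ ofReal B
  have hCS : T ≤ ENNReal.ofReal B := by
    have h2 : (2:ℝ).HolderConjugate 2 := Real.HolderConjugate.two_two
    have key := ENNReal.lintegral_mul_le_Lp_mul_Lq (volume.restrict S) h2
      (hmd.norm.ennreal_ofReal.aemeasurable) (aemeasurable_const (b := (1:ENNReal)))
    simp only [Pi.mul_apply, mul_one] at key
    calc T = ∫⁻ z in S, ENNReal.ofReal ‖deriv f z‖ := hT
      _ ≤ (∫⁻ z in S, ENNReal.ofReal ‖deriv f z‖ ^ (2:ℝ)) ^ (1/(2:ℝ)) *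
            (∫⁻ z in S, (1:ENNReal) ^ (2:ℝ)) ^ (1/(2:ℝ)) := key
      _ = (∫⁻ z in S, ENNReal.ofReal (‖deriv f z‖^2)) ^ (1/(2:ℝ)) *
            (volume S) ^ (1/(2:ℝ)) := by
          congr 1
          · congr 1
            refine lintegral_congr fun z => ?_
            rw [ENNReal.ofReal_rpow_of_nonneg (norm_nonneg _) (by norm_num : (0:ℝ) ≤ 2),
              show (2:ℝ) = ((2:ℕ):ℝ) by norm_num, Real.rpow_natCast]
          · simp
      _ = (ENNReal.ofReal (∫ z in S, ‖deriv f z‖^2)) ^ (1/(2:ℝ)) *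
            (ENNReal.ofReal (Real.pi * (1-r^2))) ^ (1/(2:ℝ)) := by
          rw [ofReal_integral_eq_lintegral_ofReal harea'
            (Filter.Eventually.of_forall fun z => sq_nonneg _), hvolS]
      _ ≤ (ENNReal.ofReal A) ^ (1/(2:ℝ)) *
            (ENNReal.ofReal (Real.pi*(1-r^2))) ^ (1/(2:ℝ)) := by
          gcongr
          exact setIntegral_mono_set harea
            (Filter.Eventually.of_forall fun z => sq_nonneg _)
            (HasSubset.Subset.eventuallyLE hSsub)
      _ = ENNReal.ofReal B := by
          rw [ENNReal.ofReal_rpow_of_nonneg hA0 (by norm_num : (0:ℝ) ≤ 1/2),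
            ENNReal.ofReal_rpow_of_nonneg (by positivity : (0:ℝ) ≤ Real.pi*(1-r^2))
              (by norm_num : (0:ℝ) ≤ 1/2),
            ← ENNReal.ofReal_mul (by positivity), hBdef,
            ← Real.sqrt_eq_rpow, ← Real.sqrt_eq_rpow, mul_comm]
  -- polar coordinates
  have hpolar : (∫⁻ p in polarCoord.target, ENNReal.ofReal p.1 * G (Complex.polarCoord.symm p))
      = T := my_complex_lintegral_polarCoord_symm G hGmeas
  set F : ℝ × ℝ → ENNReal := fun p => ENNReal.ofReal p.1 * G (Complex.polarCoord.symm p)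
    with hFdef
  have hsymmcont : Continuous (fun p : ℝ × ℝ => (Complex.polarCoord.symm p : ℂ)) := by
    simp only [Complex.polarCoord_symm_apply]
    fun_prop
  have hFmeas : Measurable F :=
    (measurable_fst.ennreal_ofReal).mul (hGmeas.comp hsymmcont.measurable)
  set H : ℝ → ENNReal := fun θ => ∫⁻ t in Set.Ioi (0:ℝ), F (t, θ) with hHdef
  have hHmeas : Measurable H := hFmeas.lintegral_prod_left'
  -- Tonelli
  have hTon : ∫⁻ θ in Set.Ioo (-Real.pi) Real.pi, H θ = T := by
    rw [← hpolar]
    have htar : polarCoord.target = Set.Ioi (0:ℝ) ×ˢ Set.Ioo (-Real.pi) Real.pi :=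
      rfl
    rw [htar]
    rw [show (volume : Measure (ℝ × ℝ)).restrict (Set.Ioi (0:ℝ) ×ˢ Set.Ioo (-Real.pi) Real.pi)
        = (volume.restrict (Set.Ioi (0:ℝ))).prod (volume.restrict (Set.Ioo (-Real.pi) Real.pi))
      from by rw [Measure.prod_restrict, ← Measure.volume_eq_prod]]
    rw [lintegral_prod_symm F hFmeas.aemeasurable]
  -- choose a good angle
  have hIoovol : volume (Set.Ioo (-Real.pi) Real.pi) = ENNReal.ofReal (2*Real.pi) := by
    rw [Real.volume_Ioo]
    congr 1
    ring
  obtain ⟨θ₀, hθ₀mem, hθ₀⟩ := exists_le_setLAverage (μ := volume)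
    (s := Set.Ioo (-Real.pi) Real.pi) (f := H)
    (by rw [hIoovol]; exact (ENNReal.ofReal_pos.mpr (by positivity)).ne')
    (by rw [hIoovol]; exact ENNReal.ofReal_ne_top)
    hHmeas.aemeasurable
  have hθ₀le : H θ₀ ≤ ENNReal.ofReal (B / (2*Real.pi)) := by
    refine hθ₀.trans ?_
    rw [setLAverage_eq, hTon, hIoovol]
    calc T / ENNReal.ofReal (2*Real.pi)
        ≤ ENNReal.ofReal B / ENNReal.ofReal (2*Real.pi) := by gcongr
      _ = ENNReal.ofReal (B/(2*Real.pi)) := (ENNReal.ofReal_div_of_pos (by positivity)).symm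
  -- the good ray
  set e : ℂ := Real.cos θ₀ + Real.sin θ₀ * Complex.I with hedef
  have hsymm : ∀ t : ℝ, (Complex.polarCoord.symm (t, θ₀) : ℂ) = (t:ℂ) * e := fun t => by
    rw [Complex.polarCoord_symm_apply]
  have habse : ‖e‖ = 1 := by
    rw [hedef, Complex.ofReal_cos, Complex.ofReal_sin]
    exact Complex.norm_cos_add_sin_mul_I θ₀
  have habs : ∀ t : ℝ, ‖(t:ℂ) * e‖ = |t| := by
    intro t
    rw [norm_mul, habse, Complex.norm_real, Real.norm_eq_abs, mul_one]
  -- the ray integral J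
  set J := ∫⁻ t in Set.Ico r 1, ENNReal.ofReal ‖deriv f ((t:ℂ) * e)‖ with hJdef
  have hrJ : ENNReal.ofReal r * J ≤ H θ₀ := by
    have h1 : ∀ t ∈ Set.Ico r 1,
        ENNReal.ofReal r * ENNReal.ofReal ‖deriv f ((t:ℂ)*e)‖ ≤ F (t, θ₀) := by
      intro t ht
      have htpos : (0:ℝ) ≤ t := (hr0.trans_le ht.1).le
      have habs' : ‖((t:ℂ)*e)‖ = t := by rw [habs, abs_of_nonneg htpos]
      have hmemS : ((t:ℂ)*e) ∈ S := by
        constructor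
        · rw [habs']; exact ht.1
        · rw [habs']; exact ht.2
      show ENNReal.ofReal r * ENNReal.ofReal ‖deriv f ((t:ℂ)*e)‖
        ≤ ENNReal.ofReal t * G (Complex.polarCoord.symm (t, θ₀))
      rw [hsymm t, hGdef, Set.indicator_of_mem hmemS]
      exact mul_le_mul_left (ENNReal.ofReal_le_ofReal ht.1) _
    calc ENNReal.ofReal r * J
        = ∫⁻ t in Set.Ico r 1, ENNReal.ofReal r * ENNReal.ofReal ‖deriv f ((t:ℂ)*e)‖ :=
          (lintegral_const_mul' _ _ ENNReal.ofReal_ne_top).symm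
      _ ≤ ∫⁻ t in Set.Ico r 1, F (t, θ₀) :=
          setLIntegral_mono (hFmeas.comp (measurable_id.prodMk measurable_const)) h1
      _ ≤ H θ₀ := lintegral_mono_set (fun t ht => hr0.trans_le ht.1)
  have hJle : J ≤ ENNReal.ofReal (B / (2*Real.pi) / r) := by
    have h2 : ENNReal.ofReal r * J ≤ ENNReal.ofReal (B/(2*Real.pi)) := hrJ.trans hθ₀le
    rw [ENNReal.ofReal_div_of_pos hr0, ENNReal.le_div_iff_mul_le
      (Or.inl (ENNReal.ofReal_pos.mpr hr0).ne') (Or.inl ENNReal.ofReal_ne_top), mul_comm]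
    exact h2
  -- FTC along the ray
  have hmem : ∀ t : ℝ, |t| < 1 → ((t:ℂ) * e) ∈ Metric.ball (0:ℂ) 1 := by
    intro t ht
    rw [Metric.mem_ball, Complex.dist_eq, sub_zero, habs]
    exact ht
  have hray : ∀ t : ℝ, |t| < 1 →
      HasDerivAt (fun u : ℝ => f ((u:ℂ) * e)) (e • deriv f ((t:ℂ)*e)) t := by
    intro t ht
    have h1 : HasDerivAt (fun u : ℝ => ((u:ℂ) * e)) e t := by
      have h0 := ((hasDerivAt_id t).ofReal_comp).mul_const e
      simpa using h0
    have h2 : HasDerivAt f (deriv f ((t:ℂ)*e)) ((t:ℂ)*e) :=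
      (hf.differentiableAt (Metric.isOpen_ball.mem_nhds (hmem t ht))).hasDerivAt
    have h3 := HasDerivAt.scomp t h2 h1
    exact h3
  have hFTC : ∀ a b : ℝ, 0 ≤ a → a ≤ b → b < 1 →
      f ((b:ℂ)*e) - f ((a:ℂ)*e) = ∫ t in a..b, e • deriv f ((t:ℂ)*e) := by
    intro a b ha hab hb1
    have huIcc : Set.uIcc a b = Set.Icc a b := Set.uIcc_of_le hab
    refine (intervalIntegral.integral_eq_sub_of_hasDerivAt (f := fun u : ℝ => f ((u:ℂ)*e))
      (f' := fun t : ℝ => e • deriv f ((t:ℂ)*e)) (fun t ht => ?_) ?_).symm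
    · apply hray
      rw [huIcc] at ht
      rw [abs_lt]
      exact ⟨by linarith [ht.1], lt_of_le_of_lt ht.2 hb1⟩
    · apply ContinuousOn.intervalIntegrable
      refine ContinuousOn.const_smul (g := fun t : ℝ => deriv f ((t:ℂ)*e)) ?_ e
      apply hcont.comp ((Complex.continuous_ofReal.mul continuous_const).continuousOn)
      intro t ht
      rw [huIcc] at ht
      exact hmem t (by rw [abs_lt]; exact ⟨by linarith [ht.1], lt_of_le_of_lt ht.2 hb1⟩)
  have hbound1 : ‖f ((r:ℂ)*e) - f 0‖ ≤ M * r := by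
    have h0 : f 0 = f (((0:ℝ):ℂ)*e) := by norm_num
    rw [h0, hFTC 0 r le_rfl hr0.le hr1]
    have hb := intervalIntegral.norm_integral_le_of_norm_le_const (C := M) (a := (0:ℝ)) (b := r)
      (f := fun t : ℝ => e • deriv f ((t:ℂ)*e)) ?_
    · calc ‖∫ t in (0:ℝ)..r, e • deriv f ((t:ℂ)*e)‖ ≤ M * |r - 0| := hb
        _ = M * r := by rw [sub_zero, abs_of_nonneg hr0.le]
    · intro x hx
      rw [Set.uIoc_of_le hr0.le] at hx
      rw [norm_smul, habse, one_mul]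
      exact hM _ (by rw [habs, abs_of_nonneg hx.1.le]; exact hx.2)
  have hbound2 : ∀ s : ℝ, s ∈ Set.Ioo r 1 →
      ‖f ((s:ℂ)*e) - f ((r:ℂ)*e)‖ ≤ B/(2*Real.pi)/r := by
    intro s hs
    rw [hFTC r s hr0.le hs.1.le hs.2]
    have hcont2 : ContinuousOn (fun t : ℝ => deriv f ((t:ℂ)*e)) (Set.Icc r s) := by
      apply hcont.comp ((Complex.continuous_ofReal.mul continuous_const).continuousOn)
      intro t ht
      exact hmem t (by rw [abs_lt]; exact ⟨by linarith [ht.1], lt_of_le_of_lt ht.2 hs.2⟩)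
    have hint : IntegrableOn (fun t : ℝ => ‖deriv f ((t:ℂ)*e)‖) (Set.Ioc r s) :=
      (hcont2.norm.integrableOn_Icc).mono_set Set.Ioc_subset_Icc_self
    calc ‖∫ t in r..s, e • deriv f ((t:ℂ)*e)‖
        ≤ ∫ t in r..s, ‖e • deriv f ((t:ℂ)*e)‖ :=
          intervalIntegral.norm_integral_le_integral_norm hs.1.le
      _ = ∫ t in r..s, ‖deriv f ((t:ℂ)*e)‖ := by
          simp [norm_smul, habse]
      _ ≤ B/(2*Real.pi)/r := by
          rw [intervalIntegral.integral_of_le hs.1.le]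
          have hle : ENNReal.ofReal (∫ t in Set.Ioc r s, ‖deriv f ((t:ℂ)*e)‖)
              ≤ ENNReal.ofReal (B/(2*Real.pi)/r) := by
            rw [ofReal_integral_eq_lintegral_ofReal hint
              (Filter.Eventually.of_forall fun t => norm_nonneg _)]
            refine le_trans (lintegral_mono_set ?_) hJle
            intro t ht
            exact ⟨ht.1.le, lt_of_le_of_lt ht.2 hs.2⟩
          exact (ENNReal.ofReal_le_ofReal_iff
            (div_nonneg (div_nonneg hB0 (by positivity)) hr0.le)).mp hle
  -- the key estimate for the infimum on annuli
  have hkey : ∀ s : ℝ, s ∈ Set.Ioo r 1 →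
      sInf ((fun z : ℂ => ‖f z - f 0‖) '' {z : ℂ | s ≤ ‖z‖ ∧ ‖z‖ < 1})
        ≤ M*r + B/(2*Real.pi)/r := by
    intro s hs
    have hz : ((s:ℂ)*e) ∈ {z : ℂ | s ≤ ‖z‖ ∧ ‖z‖ < 1} := by
      have habs' : ‖((s:ℂ)*e)‖ = s := by
        rw [habs, abs_of_nonneg (hr0.trans hs.1).le]
      exact ⟨by rw [habs'], by rw [habs']; exact hs.2⟩
    have hbdd' : BddBelow ((fun z : ℂ => ‖f z - f 0‖) ''
        {z : ℂ | s ≤ ‖z‖ ∧ ‖z‖ < 1}) := by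
      refine ⟨0, fun x hx => ?_⟩
      obtain ⟨z, _, rfl⟩ := hx
      exact norm_nonneg _
    refine le_trans (csInf_le hbdd' (Set.mem_image_of_mem _ hz)) ?_
    calc ‖f ((s:ℂ)*e) - f 0‖
        ≤ ‖f ((s:ℂ)*e) - f ((r:ℂ)*e)‖ + ‖f ((r:ℂ)*e) - f 0‖ := by
          have := dist_triangle (f ((s:ℂ)*e)) (f ((r:ℂ)*e)) (f 0)
          simpa [dist_eq_norm] using this
      _ ≤ B/(2*Real.pi)/r + M*r := add_le_add (hbound2 s hs) hbound1
      _ = M*r + B/(2*Real.pi)/r := by ring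
  -- conclude via liminf
  have hLle : L ≤ M * r + B/(2*Real.pi)/r := by
    rw [hL]
    apply Filter.liminf_le_of_frequently_le
    · apply Filter.Eventually.frequently
      have h1 : ∀ᶠ s in nhdsWithin (1:ℝ) (Set.Iio 1), s ∈ Set.Ioi r :=
        eventually_nhdsWithin_of_eventually_nhds (Ioi_mem_nhds hr1)
      have h2 : ∀ᶠ s in nhdsWithin (1:ℝ) (Set.Iio 1), s ∈ Set.Iio 1 :=
        eventually_mem_nhdsWithin
      filter_upwards [h1, h2] with s hs1 hs2
      exact hkey s ⟨hs1, hs2⟩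
    · refine isBoundedUnder_of ⟨0, fun s => ?_⟩
      refine Real.sInf_nonneg fun x hx => ?_
      obtain ⟨z, _, rfl⟩ := hx
      exact norm_nonneg _
  -- final algebra
  have h3 : (1/r) * L ≤ (1/r) * (M*r + B/(2*Real.pi)/r) :=
    mul_le_mul_of_nonneg_left hLle (by positivity)
  have h4 : (1/r) * (M*r + B/(2*Real.pi)/r)
      = M + Real.sqrt (Real.pi*(1-r^2)) / (2*Real.pi*r^2) * Real.sqrt A := by
    rw [hBdef]
    field_simp
  rw [ge_iff_le, sub_le_iff_le_add]
  have h5 := h3.trans_eq h4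
  linarith
end

section
/- Let (f_n) be holomorphic maps f_n : 𝔻 → ℂⁿ with area(f_n) finite, and set L_n = liminf_{|z| → 1} ‖f_n(z) − f_n(0)‖. If L_n → ∞ and there is a constant B > 0 with area(f_n) ≤ B·L_n² for all n, then sup_{z ∈ 𝔻} (1−|z|²)·‖f_n'(z)‖ → ∞ as n → ∞. (This is the paper's Proposition 'area(f_n) = O(d²(f_n(0), f_n(∂𝔻))) implies the hyperbolic derivatives blow up', for maps into ℂⁿ with the standard metric.) -/
open MeasureTheory Filter Set

noncomputable section StatementNineAux

private def cir (θ : ℝ) : ℂ := Real.cos θ + Real.sin θ * Complex.I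

private lemma abs_cir (θ : ℝ) : ‖cir θ‖ = 1 := by
  unfold cir
  rw [Complex.ofReal_cos, Complex.ofReal_sin]
  exact Complex.norm_cos_add_sin_mul_I θ

private lemma abs_mul_cir (t θ : ℝ) : ‖(t : ℂ) * cir θ‖ = |t| := by
  rw [norm_mul, abs_cir, Complex.norm_real, Real.norm_eq_abs, mul_one]

private lemma mem_ball_mul_cir {t : ℝ} (θ : ℝ) (ht : |t| < 1) :
    ((t : ℂ) * cir θ) ∈ Metric.ball (0 : ℂ) 1 := by
  rw [Metric.mem_ball, dist_zero_right, abs_mul_cir]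
  exact ht

/-- FTC along a radius. -/
private lemma ftc_radial (m : ℕ) (f : ℂ → EuclideanSpace ℂ (Fin m))
    (hf : DifferentiableOn ℂ f (Metric.ball (0 : ℂ) 1))
    {s : ℝ} (hs0 : 0 ≤ s) (hs1 : s < 1) (θ : ℝ) :
    ‖f ((s : ℂ) * cir θ) - f 0‖ ≤ ∫ t in (0:ℝ)..s, ‖deriv f ((t : ℂ) * cir θ)‖ := by
  have hdc : ContinuousOn (deriv f) (Metric.ball (0 : ℂ) 1) :=
    ((hf.analyticOnNhd Metric.isOpen_ball).deriv).continuousOn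
  have hmem : ∀ t ∈ Set.uIcc (0:ℝ) s, ((t : ℂ) * cir θ) ∈ Metric.ball (0 : ℂ) 1 := by
    intro t ht
    rw [Set.uIcc_of_le hs0] at ht
    exact mem_ball_mul_cir θ (lt_of_le_of_lt (abs_le.2 ⟨by linarith [ht.1], ht.2⟩) hs1)
  have hγ : ∀ t ∈ Set.uIcc (0:ℝ) s,
      HasDerivAt (fun t : ℝ => f ((t : ℂ) * cir θ))
        (cir θ • deriv f ((t : ℂ) * cir θ)) t := by
    intro t ht
    have h1 : HasDerivAt f (deriv f ((t : ℂ) * cir θ)) ((t : ℂ) * cir θ) :=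
      (hf.differentiableAt (Metric.isOpen_ball.mem_nhds (hmem t ht))).hasDerivAt
    have h2 : HasDerivAt (fun t : ℝ => (t : ℂ) * cir θ) (cir θ) t := by
      simpa using (hasDerivAt_id t).smul_const (cir θ)
    exact h1.scomp t h2
  have hcont : ContinuousOn (fun t : ℝ => cir θ • deriv f ((t : ℂ) * cir θ))
      (Set.uIcc (0:ℝ) s) := by
    refine ContinuousOn.const_smul (g := fun t : ℝ => deriv f ((t : ℂ) * cir θ)) ?_ (cir θ)
    exact hdc.comp (Continuous.continuousOn (by continuity)) hmem
  have hint : IntervalIntegrable (fun t : ℝ => cir θ • deriv f ((t : ℂ) * cir θ))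
      MeasureTheory.volume 0 s := hcont.intervalIntegrable
  have heq := intervalIntegral.integral_eq_sub_of_hasDerivAt hγ hint
  have h0 : ((0 : ℝ) : ℂ) * cir θ = 0 := by simp
  calc ‖f ((s : ℂ) * cir θ) - f 0‖
      = ‖∫ t in (0:ℝ)..s, cir θ • deriv f ((t : ℂ) * cir θ)‖ := by
        rw [heq, h0]
    _ ≤ ∫ t in (0:ℝ)..s, ‖cir θ • deriv f ((t : ℂ) * cir θ)‖ :=
        intervalIntegral.norm_integral_le_integral_norm hs0
    _ = ∫ t in (0:ℝ)..s, ‖deriv f ((t : ℂ) * cir θ)‖ := by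
        apply intervalIntegral.integral_congr
        intro t _
        simp only [norm_smul, abs_cir, one_mul]


open Real in
/-- Existence of a good angle via polar coordinates and Fubini. -/
private lemma polar_slice (m : ℕ) (f : ℂ → EuclideanSpace ℂ (Fin m))
    (hf : DifferentiableOn ℂ f (Metric.ball (0 : ℂ) 1))
    (harea : IntegrableOn (fun z => ‖deriv f z‖ ^ 2) (Metric.ball (0 : ℂ) 1))
    (ρ s G : ℝ) (hρ0 : 0 < ρ) (hρs : ρ < s) (hs1 : s < 1)
    (hG : (∫ z in Metric.ball (0 : ℂ) 1, ‖deriv f z‖ ^ 2) < 2 * π * G) :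
    ∃ θ ∈ Set.Ioo (-π) π, (∫ t in ρ..s, t * ‖deriv f ((t : ℂ) * cir θ)‖ ^ 2) ≤ G := by
  by_contra hcon
  push_neg at hcon
  have hdc : ContinuousOn (deriv f) (Metric.ball (0 : ℂ) 1) :=
    ((hf.analyticOnNhd Metric.isOpen_ball).deriv).continuousOn
  set A : Set ℂ := {z : ℂ | ρ ≤ ‖z‖ ∧ ‖z‖ ≤ s} with hA
  have hAclosed : IsClosed A :=
    (isClosed_le continuous_const continuous_norm).inter
      (isClosed_le continuous_norm continuous_const)
  have hAmeas : MeasurableSet A := hAclosed.measurableSet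
  have hAball : A ⊆ Metric.ball (0 : ℂ) 1 := by
    intro z hz
    rw [Metric.mem_ball, dist_zero_right]
    exact lt_of_le_of_lt hz.2 hs1
  set F : ℂ → ℝ := Set.indicator A (fun z => ‖deriv f z‖ ^ 2) with hF
  have hF0 : ∀ z, 0 ≤ F z := fun z => Set.indicator_nonneg (fun y _ => by positivity) z
  -- boundedness of F
  have hAcomp : IsCompact A := by
    apply (isCompact_closedBall (0:ℂ) s).of_isClosed_subset hAclosed
    intro z hz
    rw [Metric.mem_closedBall, dist_zero_right]
    exact hz.2
  obtain ⟨C, hC⟩ := hAcomp.exists_bound_of_continuousOn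
    ((hdc.mono hAball).norm.pow 2)
  set C' : ℝ := max C 0 with hC'
  have hC'0 : 0 ≤ C' := le_max_right _ _
  have hFle : ∀ z, F z ≤ C' := by
    intro z
    by_cases hz : z ∈ A
    · rw [hF, Set.indicator_of_mem hz]
      exact le_trans (le_trans (le_abs_self _) (hC z hz)) (le_max_left _ _)
    · rw [hF, Set.indicator_of_notMem hz]
      exact hC'0
  -- measurability of F
  have hFmeas : Measurable F := by
    apply Measurable.indicator _ hAmeas
    exact ((stronglyMeasurable_deriv f).norm.measurable.pow_const 2)
  -- the function on polar coordinates
  set Ψ : ℝ × ℝ → ℝ :=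
    Set.indicator polarCoord.target (fun p => p.1 * F ((p.1 : ℂ) * cir p.2)) with hΨ
  have hsymm : ∀ p : ℝ × ℝ, Complex.polarCoord.symm p = (p.1 : ℂ) * cir p.2 := by
    intro p
    rw [Complex.polarCoord_symm_apply]
    unfold cir
    ring
  have htarget : polarCoord.target = Set.Ioi (0:ℝ) ×ˢ Set.Ioo (-π) π := polarCoord_target
  have hΨ0 : ∀ p, 0 ≤ Ψ p := by
    intro p
    apply Set.indicator_nonneg
    intro q hq
    rw [htarget] at hq
    exact mul_nonneg (le_of_lt hq.1) (hF0 _)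
  have hΨmeas : Measurable Ψ := by
    apply Measurable.indicator _ polarCoord.open_target.measurableSet
    apply Measurable.mul measurable_fst
    apply hFmeas.comp
    have hcir : Continuous cir := by
      unfold cir
      exact (Complex.continuous_ofReal.comp Real.continuous_cos).add
        ((Complex.continuous_ofReal.comp Real.continuous_sin).mul continuous_const)
    exact ((Complex.continuous_ofReal.comp continuous_fst).mul
      (hcir.comp continuous_snd)).measurable
  -- integrability of Ψ
  have hΨint : Integrable Ψ (volume : Measure (ℝ × ℝ)) := by
    apply Integrable.mono' (g := Set.indicator (Set.Icc (0:ℝ) 1 ×ˢ Set.Icc (-π) π)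
      (fun _ => C'))
    · rw [integrable_indicator_iff ((measurableSet_Icc).prod measurableSet_Icc)]
      refine integrableOn_const ?_
      exact ((isCompact_Icc.prod isCompact_Icc).measure_lt_top).ne
    · exact hΨmeas.aestronglyMeasurable
    · apply Filter.Eventually.of_forall
      intro p
      by_cases hp : p ∈ polarCoord.target
      · rw [htarget] at hp
        by_cases hp1 : p.1 ≤ s
        · have hpQ : p ∈ Set.Icc (0:ℝ) 1 ×ˢ Set.Icc (-π) π := by
            constructor
            · exact ⟨le_of_lt hp.1, le_trans hp1 (le_of_lt hs1)⟩
            · exact ⟨le_of_lt hp.2.1, le_of_lt hp.2.2⟩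
          rw [Set.indicator_of_mem hpQ]
          rw [Real.norm_eq_abs, abs_of_nonneg (hΨ0 p), hΨ, Set.indicator_of_mem (htarget ▸ hp)]
          calc p.1 * F ((p.1:ℂ) * cir p.2) ≤ 1 * C' := by
                apply mul_le_mul _ (hFle _) (hF0 _) zero_le_one
                linarith [hp.1, hs1, hp1]
            _ = C' := one_mul _
        · push_neg at hp1
          have : F ((p.1:ℂ) * cir p.2) = 0 := by
            apply Set.indicator_of_notMem
            intro hmem
            have h2 : ‖(p.1:ℂ) * cir p.2‖ ≤ s := hmem.2
            rw [abs_mul_cir, abs_of_pos hp.1] at h2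
            exact absurd h2 (not_le.2 hp1)
          rw [Real.norm_eq_abs, abs_of_nonneg (hΨ0 p), hΨ,
            Set.indicator_of_mem (htarget ▸ hp), this, mul_zero]
          exact Set.indicator_nonneg (fun _ _ => hC'0) p
      · rw [hΨ, Set.indicator_of_notMem hp, norm_zero]
        exact Set.indicator_nonneg (fun _ _ => hC'0) p
  -- total integral of Ψ
  have hfuneq : (fun p : ℝ × ℝ => p.1 • F (Complex.polarCoord.symm p))
      = fun p : ℝ × ℝ => p.1 * F ((p.1 : ℂ) * cir p.2) := by
    funext p
    rw [hsymm p, smul_eq_mul]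
  have htot : (∫ p, Ψ p) = ∫ z in A, ‖deriv f z‖ ^ 2 := by
    rw [hΨ, integral_indicator polarCoord.open_target.measurableSet, ← hfuneq,
      Complex.integral_comp_polarCoord_symm F, hF, integral_indicator hAmeas]
  have hAle : (∫ z in A, ‖deriv f z‖ ^ 2) ≤ ∫ z in Metric.ball (0:ℂ) 1, ‖deriv f z‖ ^ 2 := by
    apply setIntegral_mono_set harea
    · exact Filter.Eventually.of_forall (fun z => by positivity)
    · exact HasSubset.Subset.eventuallyLE hAball
  -- Fubini
  have hprod : (volume : Measure (ℝ × ℝ)) = (volume : Measure ℝ).prod volume :=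
    Measure.volume_eq_prod ℝ ℝ
  have hΨint' : Integrable Ψ ((volume : Measure ℝ).prod volume) := hprod ▸ hΨint
  set g : ℝ → ℝ := fun θ => ∫ r : ℝ, Ψ (r, θ) with hg
  have hfub : (∫ p, Ψ p) = ∫ θ, g θ := by
    rw [hprod]
    exact integral_prod_symm Ψ hΨint'
  have hgint : Integrable g := hΨint'.integral_prod_right
  have hslice : ∀ᵐ θ : ℝ, Integrable (fun r => Ψ (r, θ)) := hΨint'.prod_left_ae
  -- g vanishes off Ioo
  have hgzero : ∀ θ, θ ∉ Set.Ioo (-π) π → g θ = 0 := by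
    intro θ hθ
    rw [hg]
    have : ∀ r : ℝ, Ψ (r, θ) = 0 := by
      intro r
      apply Set.indicator_of_notMem
      rw [htarget]
      intro hm
      exact hθ hm.2
    simp only [this, integral_zero]
  -- lower bound for g on Ioo, a.e.
  have hglow : ∀ᵐ θ : ℝ, θ ∈ Set.Ioo (-π) π → G ≤ g θ := by
    filter_upwards [hslice] with θ hθint hθIoo
    have hsub : ∀ r ∈ Set.Ioc ρ s, Ψ (r, θ) = r * ‖deriv f ((r:ℂ) * cir θ)‖ ^ 2 := by
      intro r hr
      have hrt : (r, θ) ∈ polarCoord.target := by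
        rw [htarget]
        exact ⟨lt_trans hρ0 hr.1, hθIoo⟩
      rw [hΨ, Set.indicator_of_mem hrt]
      have : ((r:ℂ) * cir θ) ∈ A := by
        rw [hA]
        constructor <;> rw [abs_mul_cir, abs_of_pos (lt_trans hρ0 hr.1)]
        · exact le_of_lt hr.1
        · exact hr.2
      rw [hF, Set.indicator_of_mem this]
    have h1 : (∫ t in ρ..s, t * ‖deriv f ((t:ℂ) * cir θ)‖ ^ 2)
        = ∫ r in Set.Ioc ρ s, Ψ (r, θ) := by
      rw [intervalIntegral.integral_of_le (le_of_lt hρs)]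
      exact (setIntegral_congr_fun measurableSet_Ioc hsub).symm
    have h2 : (∫ r in Set.Ioc ρ s, Ψ (r, θ)) ≤ g θ := by
      rw [hg]
      exact setIntegral_le_integral hθint (Filter.Eventually.of_forall (fun r => hΨ0 _))
    have h3 := hcon θ hθIoo
    linarith
  -- integrate the lower bound
  have hIoo : (volume (Set.Ioo (-π) π)).toReal = 2 * π := by
    rw [Real.volume_Ioo, ENNReal.toReal_ofReal (by linarith [Real.pi_pos])]
    ring
  have hmain : 2 * π * G ≤ ∫ θ in Set.Ioo (-π) π, g θ := by
    have : (∫ _ in Set.Ioo (-π) π, G) ≤ ∫ θ in Set.Ioo (-π) π, g θ := by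
      apply integral_mono_ae
      · refine integrableOn_const ?_
        exact (by rw [Real.volume_Ioo]; exact ENNReal.ofReal_ne_top)
      · exact hgint.integrableOn
      · exact (ae_restrict_iff' measurableSet_Ioo).2 hglow
    rwa [setIntegral_const, measureReal_def, hIoo, smul_eq_mul] at this
  have hsplit : (∫ θ in Set.Ioo (-π) π, g θ) = ∫ θ, g θ :=
    setIntegral_eq_integral_of_forall_compl_eq_zero (fun θ hθ => hgzero θ hθ)
  rw [hsplit, ← hfub, htot] at hmain
  linarith [lt_of_le_of_lt hAle hG]


private lemma sqrt_add_le' {a b : ℝ} (ha : 0 ≤ a) (hb : 0 ≤ b) :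
    Real.sqrt (a + b) ≤ Real.sqrt a + Real.sqrt b := by
  have h := Real.sqrt_le_sqrt (show a + b ≤ (Real.sqrt a + Real.sqrt b) ^ 2 by
    nlinarith [Real.sq_sqrt ha, Real.sq_sqrt hb, Real.sqrt_nonneg a, Real.sqrt_nonneg b])
  calc Real.sqrt (a + b) ≤ Real.sqrt ((Real.sqrt a + Real.sqrt b) ^ 2) := h
    _ = Real.sqrt a + Real.sqrt b := Real.sqrt_sq (by positivity)

set_option maxHeartbeats 1000000 in
open Real in
private lemma key (m : ℕ) (f : ℂ → EuclideanSpace ℂ (Fin m))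
    (hf : DifferentiableOn ℂ f (Metric.ball (0 : ℂ) 1))
    (harea : IntegrableOn (fun z => ‖deriv f z‖ ^ 2) (Metric.ball (0 : ℂ) 1))
    (B M Lv K ρ : ℝ) (hB : 0 < B) (hKdef : K = π / (2 * B)) (hρdef : ρ = Real.exp (-K))
    (hbound : (∫ z in Metric.ball (0 : ℂ) 1, ‖deriv f z‖ ^ 2) ≤ B * Lv ^ 2)
    (hLv : Lv = Filter.liminf
      (fun s : ℝ => sInf ((fun z : ℂ => ‖f z - f 0‖) ''
        {z : ℂ | s ≤ ‖z‖ ∧ ‖z‖ < 1}))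
      (nhdsWithin (1 : ℝ) (Set.Iio 1)))
    (hL1 : 1 ≤ Lv)
    (hM : ∀ z ∈ Metric.ball (0 : ℂ) 1, (1 - ‖z‖ ^ 2) * ‖deriv f z‖ ≤ M) :
    Lv ≤ 2 * (M / (1 - ρ)) + 2 * Real.sqrt K := by
  have hπ := Real.pi_pos
  have hK0 : 0 < K := by rw [hKdef]; positivity
  have hρ0 : 0 < ρ := hρdef ▸ Real.exp_pos _
  have hρ1 : ρ < 1 := by
    rw [hρdef, ← Real.exp_zero]
    exact Real.exp_lt_exp.2 (by linarith)
  have hlogρ : Real.log ρ = -K := by rw [hρdef, Real.log_exp]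
  have hM0 : 0 ≤ M := by
    have h0 := hM 0 (by simp)
    simp only [norm_zero] at h0
    norm_num at h0
    exact le_trans (norm_nonneg _) h0
  have hdc : ContinuousOn (deriv f) (Metric.ball (0 : ℂ) 1) :=
    ((hf.analyticOnNhd Metric.isOpen_ball).deriv).continuousOn
  -- constants
  obtain ⟨G, hGdef⟩ : ∃ G : ℝ, G = B * Lv ^ 2 / (2 * π) + 1 := ⟨_, rfl⟩
  have hG1 : 1 ≤ G := by
    have : 0 ≤ B * Lv ^ 2 / (2 * π) := by positivity
    linarith
  have hG0 : 0 < G := by linarith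
  obtain ⟨ε, hεdef⟩ : ∃ ε : ℝ, ε = Real.sqrt (K / G) := ⟨_, rfl⟩
  have hε0 : 0 < ε := by rw [hεdef]; exact Real.sqrt_pos.2 (by positivity)
  have hε2 : ε ^ 2 * G = K := by
    rw [hεdef, Real.sq_sqrt (by positivity : (0:ℝ) ≤ K / G)]
    field_simp
  -- the ε-balancing computation
  have hbal : ε / 2 * G + 1 / (2 * ε) * K ≤ Lv / 2 + Real.sqrt K := by
    have h1 : ε * G = Real.sqrt (K * G) := by
      rw [hεdef, ← Real.sqrt_sq (le_of_lt hG0), ← Real.sqrt_mul (by positivity)]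
      congr 1
      field_simp
      rw [Real.sq_sqrt (by positivity)]
    have h2 : K / ε = ε * G := by
      rw [div_eq_iff (ne_of_gt hε0), ← hε2]
      ring
    have h3 : Real.sqrt (K * G) ≤ Lv / 2 + Real.sqrt K := by
      have hx : K * G = (Lv / 2) ^ 2 + K := by
        rw [hGdef, hKdef]
        field_simp
      calc Real.sqrt (K * G) ≤ Real.sqrt ((Lv / 2) ^ 2) + Real.sqrt K := by
            rw [hx]; exact sqrt_add_le' (by positivity) (le_of_lt hK0)
        _ = Lv / 2 + Real.sqrt K := by
            rw [Real.sqrt_sq (by linarith)]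
    have h4 : ε / 2 * G + 1 / (2 * ε) * K = (ε * G) / 2 + (K / ε) / 2 := by
      field_simp
      try ring
    rw [h4, h2, h1]
    linarith
  -- main estimate for each s
  have keyineq : ∀ s ∈ Set.Ioo ρ 1,
      sInf ((fun z : ℂ => ‖f z - f 0‖) ''
        {z : ℂ | s ≤ ‖z‖ ∧ ‖z‖ < 1})
        ≤ M / (1 - ρ ^ 2) * ρ + (Lv / 2 + Real.sqrt K) := by
    intro s hs
    have hs0 : 0 < s := lt_trans hρ0 hs.1
    have h2πG : 2 * π * G = B * Lv ^ 2 + 2 * π := by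
      rw [hGdef]
      field_simp
      try ring
    obtain ⟨θ, hθIoo, hθ⟩ := polar_slice m f hf harea ρ s G hρ0 hs.1 hs.2
      (by rw [h2πG]; linarith)
    set z : ℂ := (s : ℂ) * cir θ with hz
    have habs : ‖z‖ = s := by rw [hz, abs_mul_cir, abs_of_pos hs0]
    have hzmem : z ∈ {w : ℂ | s ≤ ‖w‖ ∧ ‖w‖ < 1} := by
      rw [Set.mem_setOf_eq, habs]
      exact ⟨le_refl s, hs.2⟩
    have hstep1 : sInf ((fun z : ℂ => ‖f z - f 0‖) ''
        {z : ℂ | s ≤ ‖z‖ ∧ ‖z‖ < 1}) ≤ ‖f z - f 0‖ := by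
      apply csInf_le
      · exact ⟨0, fun x hx => by
          obtain ⟨w, _, hw⟩ := hx
          rw [← hw]; positivity⟩
      · exact Set.mem_image_of_mem _ hzmem
    have hstep2 := ftc_radial m f hf (le_of_lt hs0) hs.2 θ
    -- continuity of the radial integrand
    have hcont : ContinuousOn (fun t : ℝ => ‖deriv f ((t : ℂ) * cir θ)‖)
        (Set.Icc (0:ℝ) s) := by
      apply ContinuousOn.norm
      apply hdc.comp (Continuous.continuousOn ((Complex.continuous_ofReal).mul
        continuous_const))
      intro t ht
      exact mem_ball_mul_cir θ (lt_of_le_of_lt (abs_le.2 ⟨by linarith [ht.1], ht.2⟩) hs.2)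
    have hint1 : IntervalIntegrable (fun t : ℝ => ‖deriv f ((t : ℂ) * cir θ)‖)
        volume 0 ρ := by
      apply ContinuousOn.intervalIntegrable
      apply hcont.mono
      rw [Set.uIcc_of_le (le_of_lt hρ0)]
      exact Set.Icc_subset_Icc (le_refl _) (le_of_lt hs.1)
    have hint2 : IntervalIntegrable (fun t : ℝ => ‖deriv f ((t : ℂ) * cir θ)‖)
        volume ρ s := by
      apply ContinuousOn.intervalIntegrable
      apply hcont.mono
      rw [Set.uIcc_of_le (le_of_lt hs.1)]
      exact Set.Icc_subset_Icc (le_of_lt hρ0) (le_refl _)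
    have hsplit : (∫ t in (0:ℝ)..s, ‖deriv f ((t : ℂ) * cir θ)‖)
        = (∫ t in (0:ℝ)..ρ, ‖deriv f ((t : ℂ) * cir θ)‖)
          + ∫ t in ρ..s, ‖deriv f ((t : ℂ) * cir θ)‖ :=
      (intervalIntegral.integral_add_adjacent_intervals hint1 hint2).symm
    -- bound on [0, ρ]
    have hb1 : (∫ t in (0:ℝ)..ρ, ‖deriv f ((t : ℂ) * cir θ)‖) ≤ M / (1 - ρ ^ 2) * ρ := by
      have hp : ∀ t ∈ Set.Icc (0:ℝ) ρ, ‖deriv f ((t : ℂ) * cir θ)‖ ≤ M / (1 - ρ ^ 2) := by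
        intro t ht
        have ht1 : |t| < 1 := lt_of_le_of_lt (abs_le.2 ⟨by linarith [ht.1], ht.2⟩) hρ1
        have hmem := mem_ball_mul_cir θ ht1
        have hMz := hM _ hmem
        rw [abs_mul_cir] at hMz
        have h2 : 1 - ρ ^ 2 ≤ 1 - |t| ^ 2 := by
          have : |t| ≤ ρ := abs_le.2 ⟨by linarith [ht.1], ht.2⟩
          nlinarith [abs_nonneg t]
        have h3 : 0 < 1 - ρ ^ 2 := by nlinarith
        rw [le_div_iff₀ h3]
        nlinarith [norm_nonneg (deriv f ((t : ℂ) * cir θ)),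
          mul_le_mul_of_nonneg_left h2 (norm_nonneg (deriv f ((t : ℂ) * cir θ)))]
      calc (∫ t in (0:ℝ)..ρ, ‖deriv f ((t : ℂ) * cir θ)‖)
          ≤ ∫ _ in (0:ℝ)..ρ, M / (1 - ρ ^ 2) :=
            intervalIntegral.integral_mono_on (le_of_lt hρ0) hint1
              (intervalIntegrable_const) hp
        _ = M / (1 - ρ ^ 2) * ρ := by
            rw [intervalIntegral.integral_const, smul_eq_mul, sub_zero, mul_comm]
    -- bound on [ρ, s] via AM-GM
    have hb2 : (∫ t in ρ..s, ‖deriv f ((t : ℂ) * cir θ)‖)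
        ≤ ε / 2 * (∫ t in ρ..s, t * ‖deriv f ((t : ℂ) * cir θ)‖ ^ 2)
          + 1 / (2 * ε) * K := by
      have hcont2 : ContinuousOn
          (fun t : ℝ => ε / 2 * (t * ‖deriv f ((t : ℂ) * cir θ)‖ ^ 2) + 1 / (2 * ε) * (1 / t))
          (Set.Icc ρ s) := by
        apply ContinuousOn.add
        · apply ContinuousOn.mul continuousOn_const
          apply ContinuousOn.mul continuousOn_id
          exact (hcont.mono (Set.Icc_subset_Icc (le_of_lt hρ0) (le_refl _))).pow 2
        · apply ContinuousOn.mul continuousOn_const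
          apply ContinuousOn.div continuousOn_const continuousOn_id
          intro t ht
          exact ne_of_gt (lt_of_lt_of_le hρ0 ht.1)
      have hint3 : IntervalIntegrable
          (fun t : ℝ => ε / 2 * (t * ‖deriv f ((t : ℂ) * cir θ)‖ ^ 2) + 1 / (2 * ε) * (1 / t))
          volume ρ s := by
        apply ContinuousOn.intervalIntegrable
        rwa [Set.uIcc_of_le (le_of_lt hs.1)]
      have hp : ∀ t ∈ Set.Icc ρ s, ‖deriv f ((t : ℂ) * cir θ)‖
          ≤ ε / 2 * (t * ‖deriv f ((t : ℂ) * cir θ)‖ ^ 2) + 1 / (2 * ε) * (1 / t) := by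
        intro t ht
        have ht0 : 0 < t := lt_of_lt_of_le hρ0 ht.1
        set a : ℝ := ‖deriv f ((t : ℂ) * cir θ)‖ with ha
        have ha0 : 0 ≤ a := norm_nonneg _
        have hεt : 0 < ε * t := mul_pos hε0 ht0
        have h5 : a ≤ (ε * t * a ^ 2) / 2 + 1 / (2 * (ε * t)) := by
          rw [← sub_nonneg]
          have hexp : (ε * t * a ^ 2) / 2 + 1 / (2 * (ε * t)) - a
              = (ε * t * a - 1) ^ 2 / (2 * (ε * t)) := by
            field_simp
            ring
          rw [hexp]
          positivity
        calc a ≤ (ε * t * a ^ 2) / 2 + 1 / (2 * (ε * t)) := h5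
          _ = ε / 2 * (t * a ^ 2) + 1 / (2 * ε) * (1 / t) := by
              rw [one_div, one_div, one_div, mul_inv]
              ring
      have hmono := intervalIntegral.integral_mono_on (le_of_lt hs.1) hint2 hint3 hp
      -- integrate the RHS
      have hint4 : IntervalIntegrable
          (fun t : ℝ => ε / 2 * (t * ‖deriv f ((t : ℂ) * cir θ)‖ ^ 2)) volume ρ s := by
        apply ContinuousOn.intervalIntegrable
        rw [Set.uIcc_of_le (le_of_lt hs.1)]
        apply ContinuousOn.mul continuousOn_const
        apply ContinuousOn.mul continuousOn_id
        exact (hcont.mono (Set.Icc_subset_Icc (le_of_lt hρ0) (le_refl _))).pow 2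
      have hint5 : IntervalIntegrable (fun t : ℝ => 1 / (2 * ε) * (1 / t)) volume ρ s := by
        apply ContinuousOn.intervalIntegrable
        rw [Set.uIcc_of_le (le_of_lt hs.1)]
        apply ContinuousOn.mul continuousOn_const
        apply ContinuousOn.div continuousOn_const continuousOn_id
        intro t ht
        exact ne_of_gt (lt_of_lt_of_le hρ0 ht.1)
      rw [intervalIntegral.integral_add hint4 hint5, intervalIntegral.integral_const_mul,
        intervalIntegral.integral_const_mul] at hmono
      have hlog : (∫ t in ρ..s, 1 / t) = Real.log (s / ρ) := by
        apply integral_one_div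
        intro h
        rw [Set.uIcc_of_le (le_of_lt hs.1)] at h
        exact absurd h.1 (not_le.2 hρ0)
      have hlogle : Real.log (s / ρ) ≤ K := by
        rw [Real.log_div (ne_of_gt hs0) (ne_of_gt hρ0), hlogρ]
        have : Real.log s ≤ 0 := Real.log_nonpos (le_of_lt hs0) (le_of_lt hs.2)
        linarith
      have h2ε : 0 ≤ 1 / (2 * ε) := by positivity
      calc (∫ t in ρ..s, ‖deriv f ((t : ℂ) * cir θ)‖)
          ≤ ε / 2 * (∫ t in ρ..s, t * ‖deriv f ((t : ℂ) * cir θ)‖ ^ 2)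
            + 1 / (2 * ε) * ∫ t in ρ..s, 1 / t := hmono
        _ ≤ _ := by
            rw [hlog]
            have := mul_le_mul_of_nonneg_left hlogle h2ε
            linarith
    have hgE : ε / 2 * (∫ t in ρ..s, t * ‖deriv f ((t : ℂ) * cir θ)‖ ^ 2) ≤ ε / 2 * G :=
      mul_le_mul_of_nonneg_left hθ (by positivity)
    calc sInf ((fun z : ℂ => ‖f z - f 0‖) ''
        {z : ℂ | s ≤ ‖z‖ ∧ ‖z‖ < 1})
        ≤ ‖f z - f 0‖ := hstep1
      _ ≤ ∫ t in (0:ℝ)..s, ‖deriv f ((t : ℂ) * cir θ)‖ := hstep2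
      _ = (∫ t in (0:ℝ)..ρ, ‖deriv f ((t : ℂ) * cir θ)‖)
          + ∫ t in ρ..s, ‖deriv f ((t : ℂ) * cir θ)‖ := hsplit
      _ ≤ M / (1 - ρ ^ 2) * ρ + (ε / 2 * G + 1 / (2 * ε) * K) := by linarith
      _ ≤ M / (1 - ρ ^ 2) * ρ + (Lv / 2 + Real.sqrt K) := by linarith
  -- pass to the liminf
  have hLle : Lv ≤ M / (1 - ρ ^ 2) * ρ + (Lv / 2 + Real.sqrt K) := by
    have hll : Filter.liminf
        (fun s : ℝ => sInf ((fun z : ℂ => ‖f z - f 0‖) ''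
          {z : ℂ | s ≤ ‖z‖ ∧ ‖z‖ < 1}))
        (nhdsWithin (1 : ℝ) (Set.Iio 1))
        ≤ M / (1 - ρ ^ 2) * ρ + (Lv / 2 + Real.sqrt K) := by
      apply Filter.liminf_le_of_frequently_le
      · apply Filter.Eventually.frequently
        filter_upwards [Ioo_mem_nhdsLT_of_mem (⟨hρ1, le_refl (1:ℝ)⟩ : (1:ℝ) ∈ Set.Ioc ρ 1)]
          with s hs
        exact keyineq s hs
      · refine ⟨0, ?_⟩
        rw [Filter.eventually_map]
        apply Filter.Eventually.of_forall
        intro s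
        apply Real.sInf_nonneg
        intro x hx
        obtain ⟨w, _, hw⟩ := hx
        rw [← hw]
        positivity
    rw [← hLv] at hll
    exact hll
  have hq : M / (1 - ρ ^ 2) * ρ ≤ M / (1 - ρ) := by
    rw [div_mul_eq_mul_div, div_le_div_iff₀ (by nlinarith) (by linarith)]
    nlinarith
  linarith

end StatementNineAux

open Real in
/-- Let `f_n : 𝔻 → ℂⁿ` be holomorphic with finite area and set
`L_n = liminf_{s ↗ 1} inf_{s ≤ |z| < 1} ‖f_n(z) − f_n(0)‖`. If `L_n → ∞` and
`area(f_n) ≤ B·L_n²`, then `sup_{z ∈ 𝔻} (1−|z|²)·‖f_n'(z)‖ → ∞`. -/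
theorem hyperbolic_deriv_sup_tendsto_atTop_of_area_bigO_dist_sq
    (m : ℕ) (f : ℕ → ℂ → EuclideanSpace ℂ (Fin m))
    (hf : ∀ n, DifferentiableOn ℂ (f n) (Metric.ball (0 : ℂ) 1))
    (harea : ∀ n, IntegrableOn (fun z => ‖deriv (f n) z‖ ^ 2) (Metric.ball (0 : ℂ) 1))
    (L : ℕ → ℝ)
    (hL : ∀ n, L n = Filter.liminf
      (fun s : ℝ => sInf ((fun z : ℂ => ‖f n z - f n 0‖) ''
        {z : ℂ | s ≤ ‖z‖ ∧ ‖z‖ < 1}))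
      (nhdsWithin (1 : ℝ) (Set.Iio 1)))
    (hLtop : Tendsto L atTop atTop)
    (B : ℝ) (hB : 0 < B)
    (hbound : ∀ n, (∫ z in Metric.ball (0 : ℂ) 1, ‖deriv (f n) z‖ ^ 2) ≤ B * L n ^ 2) :
    ∀ M : ℝ, ∃ N : ℕ, ∀ n ≥ N, ∃ z ∈ Metric.ball (0 : ℂ) 1,
      M < (1 - ‖z‖ ^ 2) * ‖deriv (f n) z‖ := by
  intro M
  obtain ⟨K, hKdef⟩ : ∃ K : ℝ, K = π / (2 * B) := ⟨_, rfl⟩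
  obtain ⟨ρ, hρdef⟩ : ∃ ρ : ℝ, ρ = Real.exp (-K) := ⟨_, rfl⟩
  have hK0 : 0 < K := by rw [hKdef]; positivity
  obtain ⟨T, hTdef⟩ : ∃ T : ℝ, T = max (2 * (M / (1 - ρ)) + 2 * Real.sqrt K + 1) 1 := ⟨_, rfl⟩
  obtain ⟨N, hN⟩ := Filter.eventually_atTop.mp (hLtop.eventually_gt_atTop T)
  refine ⟨N, fun n hn => ?_⟩
  by_contra hcon
  push_neg at hcon
  have hL1 : 1 ≤ L n := by
    have := hN n hn
    rw [hTdef] at this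
    exact le_of_lt (lt_of_le_of_lt (le_max_right _ _) this)
  have hkey := key m (f n) (hf n) (harea n) B M (L n) K ρ hB hKdef hρdef (hbound n) (hL n)
    hL1 hcon
  have h1 : T < L n := hN n hn
  have h2 : 2 * (M / (1 - ρ)) + 2 * Real.sqrt K + 1 ≤ T := hTdef ▸ le_max_left _ _
  linarith
end

section
/- Let E be a real inner product space, β ≥ 0, and let ψ : E → ℝ be a C¹ (continuously Fréchet differentiable) function with ψ(x) ≥ 0 and ‖dψ_x‖ ≤ β·√(ψ(x)) for all x ∈ E. Then for all x, y ∈ E, |√(ψ(x)) − √(ψ(y))| ≤ (β/2)·‖x − y‖. (This is the estimate behind the paper's inclusion B(2s/β₀(s)) ⊆ {ψ ≤ s²} comparing metric balls with sublevel sets of a Stein potential with β₀-bounded derivative.) -/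
private lemma approx_lip
    {E : Type*} [NormedAddCommGroup E] [InnerProductSpace ℝ E]
    (β : ℝ) (hβ : 0 ≤ β) (ψ : E → ℝ) (hψ : ContDiff ℝ 1 ψ)
    (hpos : ∀ x, 0 ≤ ψ x)
    (hbound : ∀ x, ‖fderiv ℝ ψ x‖ ≤ β * Real.sqrt (ψ x))
    (c : ℝ) (hc : 0 < c) (x y : E) :
    |Real.sqrt (ψ x + c) - Real.sqrt (ψ y + c)| ≤ (β / 2) * ‖x - y‖ := by
  set f : E → ℝ := fun z => Real.sqrt (ψ z + c) with hf
  have hderiv : ∀ z : E, HasFDerivAt f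
      ((1 / (2 * Real.sqrt (ψ z + c))) • fderiv ℝ ψ z) z := by
    intro z
    have hne : ψ z + c ≠ 0 := by have := hpos z; positivity
    have h1 : HasFDerivAt (fun w => ψ w + c) (fderiv ℝ ψ z) z := by
      simpa using ((hψ.differentiable one_ne_zero z).hasFDerivAt.add_const c)
    have h2 : HasDerivAt Real.sqrt (1 / (2 * Real.sqrt (ψ z + c))) (ψ z + c) :=
      Real.hasDerivAt_sqrt hne
    exact h2.comp_hasFDerivAt z h1
  have hb : ∀ z : E, ‖(1 / (2 * Real.sqrt (ψ z + c))) • fderiv ℝ ψ z‖ ≤ β / 2 := by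
    intro z
    have hsq : 0 < Real.sqrt (ψ z + c) := Real.sqrt_pos.2 (by have := hpos z; positivity)
    rw [norm_smul]
    have : ‖(1 / (2 * Real.sqrt (ψ z + c)))‖ = 1 / (2 * Real.sqrt (ψ z + c)) := by
      rw [Real.norm_eq_abs, abs_of_pos (by positivity)]
    rw [this]
    have h1 : ‖fderiv ℝ ψ z‖ ≤ β * Real.sqrt (ψ z + c) := by
      refine (hbound z).trans ?_
      exact mul_le_mul_of_nonneg_left (Real.sqrt_le_sqrt (by linarith [hc.le])) hβ
    calc 1 / (2 * Real.sqrt (ψ z + c)) * ‖fderiv ℝ ψ z‖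
        ≤ 1 / (2 * Real.sqrt (ψ z + c)) * (β * Real.sqrt (ψ z + c)) := by
          exact mul_le_mul_of_nonneg_left h1 (by positivity)
      _ = β / 2 := by field_simp
  have key := Convex.norm_image_sub_le_of_norm_hasFDerivWithin_le
    (f := f) (s := (Set.univ : Set E)) (C := β / 2)
    (fun z _ => (hderiv z).hasFDerivWithinAt) (fun z _ => hb z)
    convex_univ (Set.mem_univ y) (Set.mem_univ x)
  simpa [Real.norm_eq_abs] using key

/-- If `ψ : E → ℝ` is `C¹` on a real inner product space, `ψ ≥ 0`
and `‖dψ_x‖ ≤ β·√(ψ x)` everywhere, then `√ψ` is `(β/2)`-Lipschitz: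
`|√(ψ x) − √(ψ y)| ≤ (β/2)·‖x − y‖`. -/
theorem sqrt_lipschitz_of_deriv_bound
    {E : Type*} [NormedAddCommGroup E] [InnerProductSpace ℝ E]
    (β : ℝ) (hβ : 0 ≤ β) (ψ : E → ℝ) (hψ : ContDiff ℝ 1 ψ)
    (hpos : ∀ x, 0 ≤ ψ x)
    (hbound : ∀ x, ‖fderiv ℝ ψ x‖ ≤ β * Real.sqrt (ψ x)) :
    ∀ x y : E, |Real.sqrt (ψ x) - Real.sqrt (ψ y)| ≤ (β / 2) * ‖x - y‖ := by
  intro x y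
  refine le_of_forall_pos_le_add ?_
  intro ε hε
  set c : ℝ := (ε / 2) ^ 2 with hcdef
  have hc : 0 < c := by positivity
  have key := approx_lip β hβ ψ hψ hpos hbound c hc x y
  -- |√a - √(a+c)| ≤ √c = ε/2
  have hclose : ∀ a : ℝ, 0 ≤ a → |Real.sqrt a - Real.sqrt (a + c)| ≤ ε / 2 := by
    intro a ha
    have h1 : Real.sqrt a ≤ Real.sqrt (a + c) := Real.sqrt_le_sqrt (by linarith)
    have h2 : Real.sqrt (a + c) ≤ Real.sqrt a + Real.sqrt c := by
      rw [Real.sqrt_le_iff]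
      refine ⟨by positivity, ?_⟩
      have ha' := Real.sq_sqrt ha
      have hc' := Real.sq_sqrt hc.le
      nlinarith [Real.sqrt_nonneg a, Real.sqrt_nonneg c]
    have hcs : Real.sqrt c = ε / 2 := by
      rw [hcdef, Real.sqrt_sq (by positivity)]
    rw [abs_sub_le_iff]
    constructor <;> nlinarith
  have hx := hclose (ψ x) (hpos x)
  have hy := hclose (ψ y) (hpos y)
  have := abs_sub_abs_le_abs_sub (Real.sqrt (ψ x) - Real.sqrt (ψ y)) 0
  have step1 : |Real.sqrt (ψ x) - Real.sqrt (ψ y)| ≤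
      |Real.sqrt (ψ x) - Real.sqrt (ψ x + c)| + |Real.sqrt (ψ x + c) - Real.sqrt (ψ y + c)|
        + |Real.sqrt (ψ y + c) - Real.sqrt (ψ y)| := by
    have a1 := abs_sub_le (Real.sqrt (ψ x)) (Real.sqrt (ψ x + c)) (Real.sqrt (ψ y))
    have a2 := abs_sub_le (Real.sqrt (ψ x + c)) (Real.sqrt (ψ y + c)) (Real.sqrt (ψ y))
    linarith
  have hy' : |Real.sqrt (ψ y + c) - Real.sqrt (ψ y)| ≤ ε / 2 := by
    rw [abs_sub_comm]; exact hy
  linarith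
end
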